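/- arXiv:1310.7834 — 5 statements merged into one kernel-verified Lean document; each statement's English description precedes it below -/
import Mathlib

section
/- Let (x,y) be a fractional solution to a matroid median instance with ∑_{i∈𝓕} x_{ij} = 1 for every client j, and write C̄_j = ∑_{i∈𝓕} c(i,j) x_{ij}. Then there exist a subset D ⊆ 𝓓 and a map σ : 𝓓 → D with σ(j) = j for every j ∈ D such that: (i) c(j,k) ≥ 4·max(C̄_j, C̄_k) for all distinct j, k ∈ D; (ii) C̄_{σ(j)} ≤ C̄_j and c(j, σ(j)) ≤ 4·C̄_j for every j ∈ 𝓓, so that, setting d'_k = ∑_{j : σ(j)=k} d_j, one has ∑_{k∈D} d'_k C̄_k ≤ ∑_{j∈𝓓} d_j C̄_j; and (iii) for every set F ⊆ 𝓕 and every assignment a : D → F, the assignment j ↦ a(σ(j)) of the original clients satisfies ∑_{j∈𝓓} d_j c(a(σ(j)), j) ≤ ∑_{k∈D} d'_k c(a(k), k) + 4·∑_{j∈𝓓} d_j C̄_j. -/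
open scoped Classical
open Finset

/-- The rank function of a matroid: the maximum cardinality of an independent
subset of the given set. -/
noncomputable def matroidRank {α : Type*} (M : Matroid α) (S : Finset α) : ℕ :=
  (S.powerset.filter (fun I : Finset α => M.Indep ↑I)).sup Finset.card

/-- Demand-consolidation lemma for matroid median (Lemma 3.1 of the paper). -/
theorem matroid_median_demand_consolidation
    {F D : Type*} [Fintype F] [Fintype D]
    (c : F ⊕ D → F ⊕ D → ℝ)
    (hc_nonneg : ∀ u v, 0 ≤ c u v)
    (hc_symm : ∀ u v, c u v = c v u)
    (hc_tri : ∀ u v w, c u w ≤ c u v + c v w)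
    (f : F → ℝ) (hf : ∀ i, 0 ≤ f i)
    (d : D → ℝ) (hd : ∀ j, 0 ≤ d j)
    (M : Matroid F) (hME : M.E = Set.univ)
    (x : F → D → ℝ) (y : F → ℝ)
    (hx : ∀ i j, 0 ≤ x i j) (hy : ∀ i, 0 ≤ y i)
    (hxy : ∀ i j, x i j ≤ y i)
    (hrank : ∀ S : Finset F, ∑ i ∈ S, y i ≤ (matroidRank M S : ℝ))
    (hx1 : ∀ j, ∑ i, x i j = 1)
    (Cbar : D → ℝ)
    (hCbar : ∀ j, Cbar j = ∑ i, c (Sum.inl i) (Sum.inr j) * x i j) :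
    ∃ (D0 : Finset D) (σ : D → D),
      (∀ j, σ j ∈ D0) ∧ (∀ j ∈ D0, σ j = j) ∧
      -- (i) separation of the centers
      (∀ j ∈ D0, ∀ k ∈ D0, j ≠ k →
        4 * max (Cbar j) (Cbar k) ≤ c (Sum.inr j) (Sum.inr k)) ∧
      -- (ii) each client is moved to a nearby center with smaller LP cost
      (∀ j : D, Cbar (σ j) ≤ Cbar j ∧ c (Sum.inr j) (Sum.inr (σ j)) ≤ 4 * Cbar j) ∧
      (∑ k ∈ D0, (∑ j ∈ univ.filter (fun j => σ j = k), d j) * Cbar k ≤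
        ∑ j, d j * Cbar j) ∧
      -- (iii) any assignment of the centers extends to the original clients
      (∀ (Fs : Finset F) (a : D → F), (∀ k ∈ D0, a k ∈ Fs) →
        ∑ j, d j * c (Sum.inl (a (σ j))) (Sum.inr j) ≤
          (∑ k ∈ D0, (∑ j ∈ univ.filter (fun j => σ j = k), d j) *
            c (Sum.inl (a k)) (Sum.inr k)) + 4 * ∑ j, d j * Cbar j) := by
  classical
  -- basic facts about Cbar
  have hCnonneg : ∀ j, 0 ≤ Cbar j := by
    intro j
    rw [hCbar j]
    exact Finset.sum_nonneg fun i _ => mul_nonneg (hc_nonneg _ _) (hx i j)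
  have hself : ∀ j : D, c (Sum.inr j) (Sum.inr j) ≤ 2 * Cbar j := by
    intro j
    have h1 : c (Sum.inr j) (Sum.inr j)
        = ∑ i, c (Sum.inr j) (Sum.inr j) * x i j := by
      rw [← Finset.mul_sum, hx1 j, mul_one]
    rw [h1, hCbar j, Finset.mul_sum]
    refine Finset.sum_le_sum fun i _ => ?_
    have htri : c (Sum.inr j) (Sum.inr j)
        ≤ 2 * c (Sum.inl i) (Sum.inr j) := by
      have := hc_tri (Sum.inr j) (Sum.inl i) (Sum.inr j)
      have hs := hc_symm (Sum.inr j) (Sum.inl i)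
      linarith
    calc c (Sum.inr j) (Sum.inr j) * x i j
        ≤ (2 * c (Sum.inl i) (Sum.inr j)) * x i j :=
          mul_le_mul_of_nonneg_right htri (hx i j)
      _ = 2 * (c (Sum.inl i) (Sum.inr j) * x i j) := by ring
  -- a strict well-founded order refining Cbar
  let e := Fintype.equivFin D
  let r : D → D → Prop := fun j k =>
    Cbar j < Cbar k ∨ (Cbar j = Cbar k ∧ e j < e k)
  haveI : IsTrans D r := by
    constructor
    rintro a b c' (h1 | ⟨h1, h1'⟩) (h2 | ⟨h2, h2'⟩)
    · exact Or.inl (h1.trans h2)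
    · exact Or.inl (h2 ▸ h1)
    · exact Or.inl (h1 ▸ h2)
    · exact Or.inr ⟨h1.trans h2, h1'.trans h2'⟩
  haveI : IsIrrefl D r := by
    constructor
    rintro a (h | ⟨_, h⟩) <;> exact lt_irrefl _ h
  have wf : WellFounded r := Finite.wellFounded_of_trans_of_irrefl r
  have hrle : ∀ {j k}, r j k → Cbar j ≤ Cbar k := by
    rintro j k (h | ⟨h, _⟩)
    · exact h.le
    · exact h.le
  have htot : ∀ j k : D, j ≠ k → r j k ∨ r k j := by
    intro j k hjk
    rcases lt_trichotomy (Cbar j) (Cbar k) with h | h | h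
    · exact Or.inl (Or.inl h)
    · rcases lt_or_gt_of_ne (fun he => hjk (e.injective he) :
        e j ≠ e k) with h' | h'
      · exact Or.inl (Or.inr ⟨h, h'⟩)
      · exact Or.inr (Or.inr ⟨h.symm, h'⟩)
    · exact Or.inr (Or.inl h)
  -- greedy definition of the centers
  let inD0 : D → Prop := wf.fix (fun j IH =>
    ∀ k, ∀ h : r k j, IH k h → 4 * Cbar j < c (Sum.inr j) (Sum.inr k))
  have hinD0 : ∀ j, inD0 j ↔
      ∀ k, r k j → inD0 k → 4 * Cbar j < c (Sum.inr j) (Sum.inr k) := by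
    intro j
    have := wf.fix_eq (fun j (IH : ∀ k, r k j → Prop) =>
      ∀ k, ∀ h : r k j, IH k h → 4 * Cbar j < c (Sum.inr j) (Sum.inr k)) j
    exact iff_of_eq this
  have hchoice : ∀ j, ¬ inD0 j → ∃ k, inD0 k ∧ r k j ∧
      c (Sum.inr j) (Sum.inr k) ≤ 4 * Cbar j := by
    intro j hj
    rw [hinD0] at hj
    push_neg at hj
    obtain ⟨k, hk1, hk2, hk3⟩ := hj
    exact ⟨k, hk2, hk1, hk3⟩
  let σ : D → D := fun j => if h : inD0 j then j else (hchoice j h).choose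
  have hσ0 : ∀ j, inD0 (σ j) := by
    intro j
    by_cases h : inD0 j
    · simpa [σ, h] using h
    · simpa [σ, h] using (hchoice j h).choose_spec.1
  have hσfix : ∀ j, inD0 j → σ j = j := by
    intro j h; simp [σ, h]
  have hσle : ∀ j, Cbar (σ j) ≤ Cbar j := by
    intro j
    by_cases h : inD0 j
    · simp [hσfix j h]
    · simp only [σ, dif_neg h]
      exact hrle (hchoice j h).choose_spec.2.1
  have hσc : ∀ j, c (Sum.inr j) (Sum.inr (σ j)) ≤ 4 * Cbar j := by
    intro j
    by_cases h : inD0 j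
    · rw [hσfix j h]
      have := hself j
      have := hCnonneg j
      linarith
    · simp only [σ, dif_neg h]
      exact (hchoice j h).choose_spec.2.2
  refine ⟨univ.filter inD0, σ, fun j => mem_filter.mpr ⟨mem_univ _, hσ0 j⟩,
    fun j hj => hσfix j (mem_filter.mp hj).2, ?_, fun j => ⟨hσle j, hσc j⟩, ?_, ?_⟩
  · -- (i)
    intro j hj k hk hjk
    have hj' := (mem_filter.mp hj).2
    have hk' := (mem_filter.mp hk).2
    rcases htot j k hjk with h | h
    · have := ((hinD0 k).mp hk') j h hj'
      have hle : Cbar j ≤ Cbar k := hrle h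
      rw [max_eq_right hle, hc_symm]
      linarith
    · have := ((hinD0 j).mp hj') k h hk'
      have hle : Cbar k ≤ Cbar j := hrle h
      rw [max_eq_left hle]
      linarith
  · -- (ii) sum
    have key : ∑ k ∈ univ.filter inD0,
        (∑ j ∈ univ.filter (fun j => σ j = k), d j) * Cbar k
        = ∑ j, d j * Cbar (σ j) := by
      rw [← Finset.sum_fiberwise_of_maps_to
        (fun j _ => mem_filter.mpr ⟨mem_univ _, hσ0 j⟩)
        (fun j => d j * Cbar (σ j))]
      refine Finset.sum_congr rfl fun k _ => ?_
      rw [Finset.sum_mul]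
      refine Finset.sum_congr rfl fun j hj => ?_
      rw [(mem_filter.mp hj).2]
    rw [key]
    exact Finset.sum_le_sum fun j _ =>
      mul_le_mul_of_nonneg_left (hσle j) (hd j)
  · -- (iii)
    intro Fs a _
    have key : ∑ k ∈ univ.filter inD0,
        (∑ j ∈ univ.filter (fun j => σ j = k), d j) * c (Sum.inl (a k)) (Sum.inr k)
        = ∑ j, d j * c (Sum.inl (a (σ j))) (Sum.inr (σ j)) := by
      rw [← Finset.sum_fiberwise_of_maps_to
        (fun j _ => mem_filter.mpr ⟨mem_univ _, hσ0 j⟩)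
        (fun j => d j * c (Sum.inl (a (σ j))) (Sum.inr (σ j)))]
      refine Finset.sum_congr rfl fun k _ => ?_
      rw [Finset.sum_mul]
      refine Finset.sum_congr rfl fun j hj => ?_
      rw [(mem_filter.mp hj).2]
    rw [key]
    have h4 : 4 * ∑ j, d j * Cbar j = ∑ j, d j * (4 * Cbar j) := by
      rw [Finset.mul_sum]; refine Finset.sum_congr rfl fun j _ => by ring
    rw [h4, ← Finset.sum_add_distrib]
    refine Finset.sum_le_sum fun j _ => ?_
    rw [← mul_add]
    refine mul_le_mul_of_nonneg_left ?_ (hd j)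
    have htri := hc_tri (Sum.inl (a (σ j))) (Sum.inr (σ j)) (Sum.inr j)
    have hs := hc_symm (Sum.inr (σ j)) (Sum.inr j)
    have := hσc j
    linarith
end

section
/- Every extreme point v of the polytope 𝒫 is half-integral, i.e., v_i ∈ {0, 1/2, 1} for every i ∈ 𝓕. -/
open scoped Classical
open Finset

def HIx (x : ℝ) : Prop := ∃ n : ℤ, x * 2 = (n : ℝ)

namespace MRaux

variable {α : Type*} {M : Matroid α} {S T I : Finset α}

lemma card_le_rank (hIS : I ⊆ S) (hI : M.Indep ↑I) : I.card ≤ matroidRank M S :=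
  Finset.le_sup (by simp [Finset.mem_filter, Finset.mem_powerset, hIS, hI])

lemma rank_exists (M : Matroid α) (S : Finset α) :
    ∃ I, I ⊆ S ∧ M.Indep ↑I ∧ I.card = matroidRank M S := by
  classical
  have hne : (S.powerset.filter (fun I : Finset α => M.Indep ↑I)).Nonempty :=
    ⟨∅, by simp⟩
  obtain ⟨I, hI, hEq⟩ := Finset.exists_mem_eq_sup _ hne Finset.card
  simp only [Finset.mem_filter, Finset.mem_powerset] at hI
  exact ⟨I, hI.1, hI.2, hEq.symm⟩

lemma rank_empty (M : Matroid α) : matroidRank M (∅ : Finset α) = 0 := by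
  classical
  apply Nat.le_antisymm _ (Nat.zero_le _)
  apply Finset.sup_le
  intro I hI
  simp only [Finset.mem_filter, Finset.mem_powerset, Finset.subset_empty] at hI
  simp [hI.1]

lemma rank_singleton_le (M : Matroid α) (i : α) : matroidRank M {i} ≤ 1 := by
  apply Finset.sup_le
  intro I hI
  simp only [Finset.mem_filter, Finset.mem_powerset] at hI
  calc I.card ≤ ({i} : Finset α).card := Finset.card_le_card hI.1
  _ = 1 := Finset.card_singleton i

lemma rank_extend (M : Matroid α) :
    ∀ n (I : Finset α), I ⊆ S → M.Indep ↑I → I.card + n = matroidRank M S →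
    ∃ B, I ⊆ B ∧ B ⊆ S ∧ M.Indep ↑B ∧ B.card = matroidRank M S := by
  intro n
  induction n with
  | zero => intro I hIS hI h; exact ⟨I, le_refl _, hIS, hI, by omega⟩
  | succ n ih =>
    intro I hIS hI h
    obtain ⟨J, hJS, hJ, hJcard⟩ := rank_exists M S
    have hlt : (↑I : Set α).encard < (↑J : Set α).encard := by
      rw [Set.encard_coe_eq_coe_finsetCard, Set.encard_coe_eq_coe_finsetCard]
      exact_mod_cast (by omega : I.card < J.card)
    obtain ⟨x, hx, hxI⟩ := hI.augment hJ hlt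
    simp only [Set.mem_diff, Finset.mem_coe] at hx
    have hxI' : M.Indep ↑(insert x I) := by rwa [Finset.coe_insert]
    have hxcard : (insert x I).card = I.card + 1 := Finset.card_insert_of_notMem hx.2
    obtain ⟨B, hIB, h2, h3, h4⟩ := ih (insert x I)
      (Finset.insert_subset (hJS hx.1) hIS) hxI' (by omega)
    exact ⟨B, (Finset.subset_insert _ _).trans hIB, h2, h3, h4⟩

lemma rank_submodular (M : Matroid α) (S T : Finset α) :
    matroidRank M (S ∪ T) + matroidRank M (S ∩ T) ≤ matroidRank M S + matroidRank M T := by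
  classical
  obtain ⟨I, hIsub, hI, hIcard⟩ := rank_exists M (S ∩ T)
  obtain ⟨B, hIB, hBsub, hB, hBcard⟩ := rank_extend M (matroidRank M (S ∪ T) - I.card) I
    (hIsub.trans Finset.inter_subset_union) hI
    (by
      have := card_le_rank (hIsub.trans Finset.inter_subset_union) hI
      omega)
  have h1 : (B ∩ S).card ≤ matroidRank M S :=
    card_le_rank Finset.inter_subset_right (hB.subset (by simp))
  have h2 : (B ∩ T).card ≤ matroidRank M T :=
    card_le_rank Finset.inter_subset_right (hB.subset (by simp))
  have h3 : (B ∩ S) ∪ (B ∩ T) = B := by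
    rw [← Finset.inter_union_distrib_left]
    exact Finset.inter_eq_left.mpr hBsub
  have h4 : (B ∩ S) ∩ (B ∩ T) = B ∩ (S ∩ T) := by
    ext x; simp; tauto
  have h5 : (B ∩ S).card + (B ∩ T).card = B.card + (B ∩ (S ∩ T)).card := by
    rw [← Finset.card_union_add_card_inter, h3, h4]
  have h6 : matroidRank M (S ∩ T) ≤ (B ∩ (S ∩ T)).card := by
    rw [← hIcard]
    exact Finset.card_le_card (Finset.subset_inter hIB hIsub)
  omega

end MRaux

namespace HIaux

lemma hi_intCast (n : ℤ) : HIx (n : ℝ) := ⟨2 * n, by push_cast; ring⟩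
lemma hi_natCast (n : ℕ) : HIx (n : ℝ) := by exact_mod_cast hi_intCast n
lemma hi_zero : HIx 0 := ⟨0, by norm_num⟩
lemma hi_add {x y : ℝ} (hx : HIx x) (hy : HIx y) : HIx (x + y) := by
  obtain ⟨n, hn⟩ := hx; obtain ⟨m, hm⟩ := hy
  exact ⟨n + m, by push_cast; linarith⟩
lemma hi_sub {x y : ℝ} (hx : HIx x) (hy : HIx y) : HIx (x - y) := by
  obtain ⟨n, hn⟩ := hx; obtain ⟨m, hm⟩ := hy
  exact ⟨n - m, by push_cast; linarith⟩
lemma hi_sum {ι : Type*} {s : Finset ι} {f : ι → ℝ} (h : ∀ i ∈ s, HIx (f i)) :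
    HIx (∑ i ∈ s, f i) := by
  classical
  induction s using Finset.induction with
  | empty => simpa using hi_zero
  | insert _ _ hx ih =>
    rw [Finset.sum_insert hx]
    exact hi_add (h _ (Finset.mem_insert_self _ _))
      (ih fun i hi => h i (Finset.mem_insert_of_mem hi))
lemma hi_half : HIx (1/2 : ℝ) := ⟨1, by norm_num⟩
lemma hi_one : HIx (1 : ℝ) := ⟨2, by norm_num⟩

lemma pert_le {x y t δ B : ℝ} (hδ : 0 < δ) (hB1 : 1 ≤ B) (ht : |t| ≤ B - 1)
    (hxy : x ≤ y) (htight : x = y → t = 0) (hslack : x ≠ y → δ ≤ y - x) :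
    x + (δ / B) * t ≤ y := by
  by_cases h : x = y
  · simp [htight h, h]
  · have hB0 : 0 < B := by linarith
    have h1 : (δ / B) * t ≤ (δ / B) * |t| := by
      apply mul_le_mul_of_nonneg_left (le_abs_self t) (by positivity)
    have h2 : (δ / B) * |t| ≤ (δ / B) * (B - 1) := by
      apply mul_le_mul_of_nonneg_left ht (by positivity)
    have h3 : (δ / B) * (B - 1) ≤ δ := by
      rw [div_mul_eq_mul_div, div_le_iff₀ hB0]
      nlinarith
    have := hslack h
    linarith

lemma pert_ge {x y t δ B : ℝ} (hδ : 0 < δ) (hB1 : 1 ≤ B) (ht : |t| ≤ B - 1)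
    (hxy : y ≤ x) (htight : x = y → t = 0) (hslack : x ≠ y → δ ≤ x - y) :
    y ≤ x + (δ / B) * t := by
  have := pert_le (x := -x) (y := -y) (t := -t) hδ hB1 (by rwa [abs_neg])
    (by linarith) (fun h => by simp [htight (by linarith : x = y)])
    (fun h => by
      have : x ≠ y := fun hh => h (by rw [hh])
      have := hslack this; linarith)
  linarith

end HIaux

open HIaux MRaux

open HIaux in
lemma extreme_w_zero {F D : Type*} [Fintype F] [Fintype D]
    (M : Matroid F) (F' G : D → Finset F) (v : F → ℝ)
    (hv0 : ∀ i, 0 ≤ v i) (hvr : ∀ S : Finset F, ∑ i ∈ S, v i ≤ (matroidRank M S : ℝ))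
    (hvFG : ∀ j, (1/2 : ℝ) ≤ ∑ i ∈ F' j, v i ∧ ∑ i ∈ G j, v i ≤ 1)
    (hext : ∀ x₁ x₂ : F → ℝ,
      ((∀ i, 0 ≤ x₁ i) ∧ (∀ S : Finset F, ∑ i ∈ S, x₁ i ≤ (matroidRank M S : ℝ)) ∧
        (∀ j, (1/2 : ℝ) ≤ ∑ i ∈ F' j, x₁ i ∧ ∑ i ∈ G j, x₁ i ≤ 1)) →
      ((∀ i, 0 ≤ x₂ i) ∧ (∀ S : Finset F, ∑ i ∈ S, x₂ i ≤ (matroidRank M S : ℝ)) ∧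
        (∀ j, (1/2 : ℝ) ≤ ∑ i ∈ F' j, x₂ i ∧ ∑ i ∈ G j, x₂ i ≤ 1)) →
      v ∈ openSegment ℝ x₁ x₂ → x₁ = v ∧ x₂ = v)
    (w : F → ℝ)
    (hw0 : ∀ i, v i = 0 → w i = 0)
    (hwT : ∀ S : Finset F, (∑ i ∈ S, v i = (matroidRank M S : ℝ)) → ∑ i ∈ S, w i = 0)
    (hwF : ∀ j, (∑ i ∈ F' j, v i = 1/2) → ∑ i ∈ F' j, w i = 0)
    (hwG : ∀ j, (∑ i ∈ G j, v i = 1) → ∑ i ∈ G j, w i = 0) :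
    w = 0 := by
  classical
  set B : ℝ := (∑ i, |w i|) + 1 with hB
  have hB1 : 1 ≤ B := by
    have : 0 ≤ ∑ i, |w i| := Finset.sum_nonneg fun i _ => abs_nonneg _
    simp [hB]; linarith
  have hsum_bound : ∀ S : Finset F, |∑ i ∈ S, w i| ≤ B - 1 := by
    intro S
    calc |∑ i ∈ S, w i| ≤ ∑ i ∈ S, |w i| := Finset.abs_sum_le_sum_abs _ _
    _ ≤ ∑ i, |w i| := Finset.sum_le_sum_of_subset_of_nonneg (Finset.subset_univ S)
        (fun i _ _ => abs_nonneg _)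
    _ = B - 1 := by simp [hB]
  set slackSet : Finset ℝ := insert 1
    (((Finset.univ.filter (fun i => v i ≠ 0)).image v) ∪
     ((Finset.univ.filter (fun S : Finset F => ∑ i ∈ S, v i ≠ (matroidRank M S : ℝ))).image
        (fun S => (matroidRank M S : ℝ) - ∑ i ∈ S, v i)) ∪
     ((Finset.univ.filter (fun j : D => ∑ i ∈ F' j, v i ≠ 1/2)).image
        (fun j => ∑ i ∈ F' j, v i - 1/2)) ∪
     ((Finset.univ.filter (fun j : D => ∑ i ∈ G j, v i ≠ 1)).image
        (fun j => 1 - ∑ i ∈ G j, v i))) with hslackSet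
  have hsne : slackSet.Nonempty := ⟨1, Finset.mem_insert_self _ _⟩
  set δ : ℝ := slackSet.min' hsne with hδdef
  have hδmem : ∀ x ∈ slackSet, δ ≤ x := fun x hx => Finset.min'_le _ _ hx
  have hδpos : 0 < δ := by
    rw [hδdef, Finset.lt_min'_iff]
    intro x hx
    simp only [hslackSet, Finset.mem_insert, Finset.mem_union, Finset.mem_image,
      Finset.mem_filter, Finset.mem_univ, true_and] at hx
    rcases hx with rfl | ((⟨i, hi, rfl⟩ | ⟨S, hS, rfl⟩) | ⟨j, hj, rfl⟩) | ⟨j, hj, rfl⟩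
    · norm_num
    · exact lt_of_le_of_ne (hv0 i) (Ne.symm hi)
    · have := hvr S; cases lt_or_eq_of_le this with
      | inl h => linarith
      | inr h => exact absurd h hS
    · have := (hvFG j).1; cases lt_or_eq_of_le this with
      | inl h => linarith
      | inr h => exact absurd h.symm hj
    · have := (hvFG j).2; cases lt_or_eq_of_le this with
      | inl h => linarith
      | inr h => exact absurd h hj
  have main : ∀ u : F → ℝ,
      (∀ S : Finset F, ∑ i ∈ S, u i = ∑ i ∈ S, w i ∨ ∑ i ∈ S, u i = -∑ i ∈ S, w i) →
      ((∀ i, 0 ≤ (v + (δ/B) • u) i) ∧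
        (∀ S : Finset F, ∑ i ∈ S, (v + (δ/B) • u) i ≤ (matroidRank M S : ℝ)) ∧
        (∀ j, (1/2 : ℝ) ≤ ∑ i ∈ F' j, (v + (δ/B) • u) i ∧
          ∑ i ∈ G j, (v + (δ/B) • u) i ≤ 1)) := by
    intro u hu
    have habs : ∀ S : Finset F, |∑ i ∈ S, u i| ≤ B - 1 := by
      intro S
      rcases hu S with h | h
      · rw [h]; exact hsum_bound S
      · rw [h, abs_neg]; exact hsum_bound S
    have hzero : ∀ S : Finset F, (∑ i ∈ S, w i = 0) → ∑ i ∈ S, u i = 0 := by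
      intro S h
      rcases hu S with h' | h' <;> rw [h', h] <;> ring
    have hsum_eq : ∀ S : Finset F, ∑ i ∈ S, (v + (δ/B) • u) i
        = (∑ i ∈ S, v i) + (δ/B) * (∑ i ∈ S, u i) := by
      intro S
      simp only [Pi.add_apply, Pi.smul_apply, smul_eq_mul, Finset.sum_add_distrib,
        Finset.mul_sum]
    refine ⟨?_, ?_, ?_⟩
    · intro i
      have h1 : (v + (δ/B) • u) i = v i + (δ/B) * u i := by
        simp [Pi.add_apply, Pi.smul_apply, smul_eq_mul]
      rw [h1]
      refine pert_ge hδpos hB1 ?_ (hv0 i) ?_ ?_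
      · have := habs {i}; rwa [Finset.sum_singleton] at this
      · intro h
        have := hzero {i} (by rw [Finset.sum_singleton]; exact hw0 i h)
        rwa [Finset.sum_singleton] at this
      · intro h
        have : v i ∈ slackSet := by
          refine Finset.mem_insert_of_mem (Finset.mem_union_left _
            (Finset.mem_union_left _ (Finset.mem_union_left _ ?_)))
          exact Finset.mem_image_of_mem _ (Finset.mem_filter.mpr ⟨Finset.mem_univ _, h⟩)
        have := hδmem _ this
        linarith
    · intro S
      rw [hsum_eq]
      refine pert_le hδpos hB1 (habs S) (hvr S) (fun h => hzero S (hwT S h)) ?_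
      intro h
      apply hδmem
      refine Finset.mem_insert_of_mem (Finset.mem_union_left _
        (Finset.mem_union_left _ (Finset.mem_union_right _ ?_)))
      exact Finset.mem_image_of_mem _ (Finset.mem_filter.mpr ⟨Finset.mem_univ _, h⟩)
    · intro j
      constructor
      · rw [hsum_eq]
        refine pert_ge hδpos hB1 (habs _) (hvFG j).1 (fun h => hzero _ (hwF j h)) ?_
        intro h
        have : (∑ i ∈ F' j, v i - 1/2) ∈ slackSet := by
          refine Finset.mem_insert_of_mem (Finset.mem_union_left _
            (Finset.mem_union_right _ ?_))
          exact Finset.mem_image_of_mem _ (Finset.mem_filter.mpr ⟨Finset.mem_univ _, h⟩)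
        have := hδmem _ this
        linarith
      · rw [hsum_eq]
        refine pert_le hδpos hB1 (habs _) (hvFG j).2 (fun h => hzero _ (hwG j h)) ?_
        intro h
        have : (1 - ∑ i ∈ G j, v i) ∈ slackSet := by
          refine Finset.mem_insert_of_mem (Finset.mem_union_right _ ?_)
          exact Finset.mem_image_of_mem _ (Finset.mem_filter.mpr ⟨Finset.mem_univ _, h⟩)
        have := hδmem _ this
        linarith
  have h1 := main w (fun S => Or.inl rfl)
  have h2 := main (-w) (fun S => Or.inr (by simp))
  have hseg : v ∈ openSegment ℝ (v + (δ/B) • (-w)) (v + (δ/B) • w) := by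
    refine ⟨1/2, 1/2, by norm_num, by norm_num, by norm_num, ?_⟩
    funext i
    simp only [Pi.add_apply, Pi.smul_apply, Pi.neg_apply, smul_eq_mul]
    ring
  have hfin := (hext _ _ h2 h1 hseg).2
  have hεw : (δ/B) • w = 0 := by
    have : v + (δ/B) • w = v := hfin
    funext i
    have := congrFun this i
    simp only [Pi.add_apply, Pi.smul_apply, smul_eq_mul] at this
    simp only [Pi.smul_apply, smul_eq_mul, Pi.zero_apply]
    linarith
  have hεne : (δ/B) ≠ 0 := by positivity
  funext i
  have := congrFun hεw i
  simp only [Pi.smul_apply, smul_eq_mul, Pi.zero_apply] at this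
  rcases mul_eq_zero.mp this with h | h
  · exact absurd h hεne
  · simpa using h

lemma exists_good_w {F D : Type*} [Fintype F] [Fintype D]
    (M : Matroid F) (F' G : D → Finset F)
    (hFG : ∀ j, F' j ⊆ G j)
    (hdisj : ∀ j k, j ≠ k → Disjoint (G j) (G k))
    (v : F → ℝ)
    (hv0 : ∀ i, 0 ≤ v i) (hvr : ∀ S : Finset F, ∑ i ∈ S, v i ≤ (matroidRank M S : ℝ))
    (hvFG : ∀ j, (1/2 : ℝ) ≤ ∑ i ∈ F' j, v i ∧ ∑ i ∈ G j, v i ≤ 1)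
    (hne : (Finset.univ.filter (fun i => ¬ HIx (v i))).Nonempty) :
    ∃ w : F → ℝ, w ≠ 0 ∧ (∀ i, v i = 0 → w i = 0) ∧
      (∀ S : Finset F, (∑ i ∈ S, v i = (matroidRank M S : ℝ)) → ∑ i ∈ S, w i = 0) ∧
      (∀ j, (∑ i ∈ F' j, v i = 1/2) → ∑ i ∈ F' j, w i = 0) ∧
      (∀ j, (∑ i ∈ G j, v i = 1) → ∑ i ∈ G j, w i = 0) := by
  classical
  set Frac : Finset F := Finset.univ.filter (fun i => ¬ HIx (v i)) with hFracDef
  have hFracMem : ∀ i, i ∈ Frac ↔ ¬ HIx (v i) := by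
    intro i; simp [hFracDef]
  set Tight : Finset F → Prop := fun S => ∑ i ∈ S, v i = (matroidRank M S : ℝ) with hTightDef
  -- tight sets form a lattice
  have tight_lattice : ∀ S T : Finset F, Tight S → Tight T →
      Tight (S ∪ T) ∧ Tight (S ∩ T) := by
    intro S T hS hT
    have hsum : (∑ i ∈ S ∪ T, v i) + ∑ i ∈ S ∩ T, v i
        = (∑ i ∈ S, v i) + ∑ i ∈ T, v i := Finset.sum_union_inter
    have hsub : (matroidRank M (S ∪ T) : ℝ) + (matroidRank M (S ∩ T) : ℝ)
        ≤ (matroidRank M S : ℝ) + (matroidRank M T : ℝ) := by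
      exact_mod_cast rank_submodular M S T
    have h1 := hvr (S ∪ T)
    have h2 := hvr (S ∩ T)
    simp only [hTightDef] at hS hT ⊢
    constructor <;> linarith
  have tight_empty : Tight ∅ := by
    simp [hTightDef, rank_empty M]
  have tight_sup : ∀ s : Finset (Finset F), (∀ B ∈ s, Tight B) → Tight (s.sup id) := by
    intro s
    induction s using Finset.induction with
    | empty => intro _; simpa using tight_empty
    | insert _ _ hx ih =>
      intro h
      rw [Finset.sup_insert]
      exact (tight_lattice _ _ (h _ (Finset.mem_insert_self _ _))
        (ih fun B hB => h B (Finset.mem_insert_of_mem hB))).1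
  -- minimal tight set containing i
  set HasL : F → Prop := fun i => ∃ S, Tight S ∧ i ∈ S with hHasLDef
  have hTi0 : ∀ i : F, ∃ A : Finset F, HasL i →
      (Tight A ∧ i ∈ A ∧ ∀ S, Tight S → i ∈ S → A ⊆ S) := by
    intro i
    by_cases h : HasL i
    · set s := Finset.univ.filter (fun S : Finset F => Tight S ∧ i ∈ S) with hs
      have hsne : s.Nonempty := by
        obtain ⟨S, hS1, hS2⟩ := h
        exact ⟨S, Finset.mem_filter.mpr ⟨Finset.mem_univ _, hS1, hS2⟩⟩
      obtain ⟨A, hA, hmin⟩ := Finset.exists_min_image s Finset.card hsne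
      simp only [hs, Finset.mem_filter, Finset.mem_univ, true_and] at hA
      refine ⟨A, fun _ => ⟨hA.1, hA.2, ?_⟩⟩
      intro S hS hiS
      have hAS : Tight (A ∩ S) := (tight_lattice A S hA.1 hS).2
      have hmem : A ∩ S ∈ s :=
        Finset.mem_filter.mpr ⟨Finset.mem_univ _, hAS, Finset.mem_inter.mpr ⟨hA.2, hiS⟩⟩
      have hcard := hmin _ hmem
      have hsub : A ∩ S ⊆ A := Finset.inter_subset_left
      have : A ∩ S = A := Finset.eq_of_subset_of_card_le hsub hcard
      intro x hx
      have hx2 : x ∈ A ∩ S := by rw [this]; exact hx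
      exact (Finset.mem_inter.mp hx2).2
    · exact ⟨∅, fun hh => (h hh).elim⟩
  choose Ti hTi using hTi0
  set L : Finset (Finset F) := (Frac.filter HasL).image Ti with hLDef
  set ClassL : Finset F → Finset F :=
    fun A => Frac.filter (fun i => HasL i ∧ Ti i = A) with hClassLDef
  have hClassL_disj : ∀ A A' : Finset F, A ≠ A' → Disjoint (ClassL A) (ClassL A') := by
    intro A A' hAA'
    rw [Finset.disjoint_left]
    intro i hi hi'
    simp only [hClassLDef, Finset.mem_filter] at hi hi'
    exact hAA' (hi.2.2 ▸ hi'.2.2 ▸ rfl)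
  have hmemClassL : ∀ i ∈ Frac, HasL i → i ∈ ClassL (Ti i) := by
    intro i hi hL
    simp only [hClassLDef]
    exact Finset.mem_filter.mpr ⟨hi, hL, rfl⟩
  have hLtight : ∀ A ∈ L, Tight A := by
    intro A hA
    simp only [hLDef, Finset.mem_image, Finset.mem_filter] at hA
    obtain ⟨i, ⟨_, hLi⟩, rfl⟩ := hA
    exact (hTi i hLi).1
  -- each class of L has at least 2 elements
  have hLcard : ∀ A ∈ L, 2 ≤ (ClassL A).card := by
    intro A hA
    obtain ⟨i0, hi0mem, rfl⟩ := by
      simpa only [hLDef, Finset.mem_image] using hA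
    have hi0F : i0 ∈ Frac := (Finset.mem_filter.mp hi0mem).1
    have hi0L : HasL i0 := (Finset.mem_filter.mp hi0mem).2
    set A := Ti i0
    have hAt : Tight A := (hTi i0 hi0L).1
    -- union of tight proper subsets of A
    set U : Finset F := (Finset.univ.filter (fun B : Finset F => Tight B ∧ B ⊂ A)).sup id
      with hUDef
    have hUt : Tight U := by
      apply tight_sup
      intro B hB
      exact (Finset.mem_filter.mp hB).2.1
    have hUsub : U ⊆ A := by
      have h : U ≤ A := Finset.sup_le (fun B hB =>
        Finset.le_iff_subset.mpr (Finset.mem_filter.mp hB).2.2.subset)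
      exact h
    have hUnotmem : ∀ i, HasL i → Ti i = A → i ∉ U := by
      intro i hLi hTiA hiU
      rw [hUDef, Finset.mem_sup] at hiU
      obtain ⟨B, hB, hiB⟩ := hiU
      simp only [Finset.mem_filter, Finset.mem_univ, true_and] at hB
      have := (hTi i hLi).2.2 B hB.1 hiB
      rw [hTiA] at this
      exact hB.2.not_subset this
    -- ClassL A equals the fractional elements of A \ U
    have hClassEq : ClassL A = (A \ U).filter (fun i => ¬ HIx (v i)) := by
      ext i
      simp only [hClassLDef, Finset.mem_filter, Finset.mem_sdiff, hFracMem]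
      constructor
      · rintro ⟨hiF, hLi, hTiA⟩
        refine ⟨⟨?_, hUnotmem i hLi hTiA⟩, hiF⟩
        have := (hTi i hLi).2.1
        rwa [hTiA] at this
      · rintro ⟨⟨hiA, hiU⟩, hiF⟩
        have hLi : HasL i := ⟨A, hAt, hiA⟩
        refine ⟨hiF, hLi, ?_⟩
        have hsub : Ti i ⊆ A := (hTi i hLi).2.2 A hAt hiA
        by_contra hne'
        have hss : Ti i ⊂ A := Finset.ssubset_iff_subset_ne.mpr ⟨hsub, hne'⟩
        apply hiU
        rw [hUDef, Finset.mem_sup]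
        exact ⟨Ti i, Finset.mem_filter.mpr ⟨Finset.mem_univ _,
          (hTi i hLi).1, hss⟩, (hTi i hLi).2.1⟩
    -- the sum of v over ClassL A is half-integral
    have hHIsum : HIx (∑ i ∈ ClassL A, v i) := by
      have h1 : (∑ i ∈ A \ U, v i) = (matroidRank M A : ℝ) - (matroidRank M U : ℝ) := by
        have := Finset.sum_sdiff (f := v) hUsub
        have hA' : ∑ i ∈ A, v i = (matroidRank M A : ℝ) := hAt
        have hU' : ∑ i ∈ U, v i = (matroidRank M U : ℝ) := hUt
        linarith
      have h2 : (∑ i ∈ (A \ U).filter (fun i => ¬ HIx (v i)), v i)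
          + ∑ i ∈ (A \ U).filter (fun i => ¬¬ HIx (v i)), v i = ∑ i ∈ A \ U, v i :=
        Finset.sum_filter_add_sum_filter_not _ _ _
      have h3 : HIx (∑ i ∈ (A \ U).filter (fun i => ¬¬ HIx (v i)), v i) := by
        apply hi_sum
        intro i hi
        have := (Finset.mem_filter.mp hi).2
        tauto
      have h4 : HIx (∑ i ∈ A \ U, v i) := by
        rw [h1]; exact hi_sub (hi_natCast _) (hi_natCast _)
      rw [hClassEq]
      have : (∑ i ∈ (A \ U).filter (fun i => ¬ HIx (v i)), v i)
          = (∑ i ∈ A \ U, v i) - ∑ i ∈ (A \ U).filter (fun i => ¬¬ HIx (v i)), v i := by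
        linarith
      rw [this]
      exact hi_sub h4 h3
    have hi0mem' : i0 ∈ ClassL A := hmemClassL i0 hi0F hi0L
    by_contra hlt
    push_neg at hlt
    interval_cases h : (ClassL A).card
    · exact absurd (Finset.card_eq_zero.mp h ▸ hi0mem') (Finset.notMem_empty i0)
    · obtain ⟨x, hx⟩ := Finset.card_eq_one.mp h
      rw [hx, Finset.sum_singleton] at hHIsum
      have hxF : x ∈ Frac := by
        have : x ∈ ClassL A := hx ▸ Finset.mem_singleton_self x
        exact (Finset.mem_filter.mp this).1
      exact absurd hHIsum ((hFracMem x).mp hxF)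
  -- right-side family
  set tF : D → Prop := fun j => ∑ i ∈ F' j, v i = 1/2 with htFDef
  set tG : D → Prop := fun j => ∑ i ∈ G j, v i = 1 with htGDef
  set P2 : D → Finset F := fun j => if tF j then G j \ F' j else G j with hP2Def
  have hP2sub : ∀ j, P2 j ⊆ G j := by
    intro j
    simp only [hP2Def]
    split
    · exact Finset.sdiff_subset
    · exact Finset.Subset.refl _
  set R : Finset (Finset F) :=
    ((Finset.univ.filter tF).image F') ∪ ((Finset.univ.filter tG).image P2) with hRDef
  have hRmem : ∀ Q ∈ R, (∃ j, tF j ∧ Q = F' j) ∨ (∃ j, tG j ∧ Q = P2 j) := by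
    intro Q hQ
    rw [hRDef, Finset.mem_union] at hQ
    rcases hQ with h | h
    · obtain ⟨j, hj, rfl⟩ := Finset.mem_image.mp h
      exact Or.inl ⟨j, (Finset.mem_filter.mp hj).2, rfl⟩
    · obtain ⟨j, hj, rfl⟩ := Finset.mem_image.mp h
      exact Or.inr ⟨j, (Finset.mem_filter.mp hj).2, rfl⟩
  have hRHI : ∀ Q ∈ R, HIx (∑ i ∈ Q, v i) := by
    intro Q hQ
    rcases hRmem Q hQ with ⟨j, hj, rfl⟩ | ⟨j, hj, rfl⟩
    · rw [hj]; exact hi_half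
    · simp only [hP2Def]
      split
      · rename_i htFj
        have h1 := Finset.sum_sdiff (f := v) (hFG j)
        have h2 : ∑ i ∈ G j, v i = 1 := hj
        have h3 : ∑ i ∈ F' j, v i = 1/2 := htFj
        have : ∑ i ∈ G j \ F' j, v i = 1/2 := by linarith
        rw [this]; exact hi_half
      · rw [hj]; exact hi_one
  have hRdisj : ∀ Q ∈ R, ∀ Q' ∈ R, Q ≠ Q' → Disjoint Q Q' := by
    have hFF : ∀ j k, j ≠ k → Disjoint (F' j) (G k) := by
      intro j k hjk
      exact (hdisj j k hjk).mono_left (hFG j)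
    intro Q hQ Q' hQ' hne'
    rcases hRmem Q hQ with ⟨j, hj, rfl⟩ | ⟨j, hj, rfl⟩ <;>
      rcases hRmem Q' hQ' with ⟨k, hk, rfl⟩ | ⟨k, hk, rfl⟩
    · by_cases hjk : j = k
      · exact absurd (hjk ▸ rfl) hne'
      · exact (hFF j k hjk).mono_right (hFG k)
    · by_cases hjk : j = k
      · subst hjk
        simp only [hP2Def, if_pos hj]
        exact Finset.disjoint_sdiff
      · exact ((hdisj j k hjk).mono_left (hFG j)).mono_right (hP2sub k)
    · by_cases hjk : j = k
      · subst hjk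
        simp only [hP2Def, if_pos hk]
        exact Finset.sdiff_disjoint
      · exact ((hdisj j k hjk).mono_left (hP2sub j)).mono_right (hFG k)
    · by_cases hjk : j = k
      · exact absurd (hjk ▸ rfl) hne'
      · exact ((hdisj j k hjk).mono_left (hP2sub j)).mono_right (hP2sub k)
  set R' : Finset (Finset F) := R.filter (fun Q => (Q ∩ Frac).Nonempty) with hR'Def
  have hR'card : ∀ Q ∈ R', 2 ≤ (Q ∩ Frac).card := by
    intro Q hQ
    have hQR : Q ∈ R := (Finset.mem_filter.mp hQ).1
    have hQne : (Q ∩ Frac).Nonempty := (Finset.mem_filter.mp hQ).2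
    have hQeq : Q ∩ Frac = Q.filter (fun i => ¬ HIx (v i)) := by
      ext i
      simp [hFracMem, Finset.mem_inter, Finset.mem_filter]
    have hHIsum : HIx (∑ i ∈ Q ∩ Frac, v i) := by
      have h2 : (∑ i ∈ Q.filter (fun i => ¬ HIx (v i)), v i)
          + ∑ i ∈ Q.filter (fun i => ¬¬ HIx (v i)), v i = ∑ i ∈ Q, v i :=
        Finset.sum_filter_add_sum_filter_not _ _ _
      have h3 : HIx (∑ i ∈ Q.filter (fun i => ¬¬ HIx (v i)), v i) := by
        apply hi_sum
        intro i hi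
        have := (Finset.mem_filter.mp hi).2
        tauto
      have h4 := hRHI Q hQR
      rw [hQeq]
      have : (∑ i ∈ Q.filter (fun i => ¬ HIx (v i)), v i)
          = (∑ i ∈ Q, v i) - ∑ i ∈ Q.filter (fun i => ¬¬ HIx (v i)), v i := by
        linarith
      rw [this]
      exact hi_sub h4 h3
    by_contra hlt
    push_neg at hlt
    interval_cases h : (Q ∩ Frac).card
    · exact absurd (Finset.card_eq_zero.mp h) (Finset.nonempty_iff_ne_empty.mp hQne)
    · obtain ⟨x, hx⟩ := Finset.card_eq_one.mp h
      rw [hx, Finset.sum_singleton] at hHIsum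
      have hxF : x ∈ Frac := by
        have : x ∈ Q ∩ Frac := hx ▸ Finset.mem_singleton_self x
        exact (Finset.mem_inter.mp this).2
      exact absurd hHIsum ((hFracMem x).mp hxF)
  -- partition facts
  have hLbiUnion : L.biUnion ClassL = Frac.filter HasL := by
    ext i
    simp only [Finset.mem_biUnion]
    constructor
    · rintro ⟨A, hA, hi⟩
      have hi' := Finset.mem_filter.mp (by simpa only [hClassLDef] using hi)
      exact Finset.mem_filter.mpr ⟨hi'.1, hi'.2.1⟩
    · intro hi
      have hiF := (Finset.mem_filter.mp hi).1
      have hiL := (Finset.mem_filter.mp hi).2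
      exact ⟨Ti i, Finset.mem_image_of_mem Ti hi, hmemClassL i hiF hiL⟩
  have hLsum : ∑ A ∈ L, (ClassL A).card = (Frac.filter HasL).card := by
    rw [← hLbiUnion]
    exact (Finset.card_biUnion (fun A _ B _ hAB => hClassL_disj A B hAB)).symm
  have h2L : 2 * L.card ≤ ∑ A ∈ L, (ClassL A).card := by
    calc 2 * L.card = ∑ _A ∈ L, 2 := by rw [Finset.sum_const, smul_eq_mul, mul_comm]
    _ ≤ ∑ A ∈ L, (ClassL A).card := Finset.sum_le_sum hLcard
  have hR'disj : ∀ Q ∈ R', ∀ Q' ∈ R', Q ≠ Q' → Disjoint (Q ∩ Frac) (Q' ∩ Frac) := by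
    intro Q hQ Q' hQ' hne'
    exact ((hRdisj Q (Finset.mem_filter.mp hQ).1 Q' (Finset.mem_filter.mp hQ').1
      hne').mono_left Finset.inter_subset_left).mono_right Finset.inter_subset_left
  have hRbiUnion_sub : R'.biUnion (fun Q => Q ∩ Frac) ⊆ Frac := by
    intro i hi
    obtain ⟨Q, _, hiQ⟩ := Finset.mem_biUnion.mp hi
    exact (Finset.mem_inter.mp hiQ).2
  have hRsum : ∑ Q ∈ R', (Q ∩ Frac).card = (R'.biUnion (fun Q => Q ∩ Frac)).card :=
    (Finset.card_biUnion (fun Q hQ Q' hQ' hne' => hR'disj Q hQ Q' hQ' hne')).symm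
  have h2R : 2 * R'.card ≤ ∑ Q ∈ R', (Q ∩ Frac).card := by
    calc 2 * R'.card = ∑ _Q ∈ R', 2 := by rw [Finset.sum_const, smul_eq_mul, mul_comm]
    _ ≤ ∑ Q ∈ R', (Q ∩ Frac).card := Finset.sum_le_sum hR'card
  set K : Finset F := Finset.univ \ Frac with hKDef
  let Φ : (F → ℝ) →ₗ[ℝ] ((↥L ⊕ ↥R' → ℝ) × (↥K → ℝ)) :=
    { toFun := fun w =>
        (fun x => match x with
          | Sum.inl A => ∑ i ∈ ClassL ↑A, w i
          | Sum.inr Q => ∑ i ∈ (↑Q : Finset F) ∩ Frac, w i,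
         fun i => w ↑i),
      map_add' := by
        intro a b
        refine Prod.ext ?_ ?_
        · funext x
          rcases x with A | Q <;> simp [Finset.sum_add_distrib]
        · funext i
          simp
      map_smul' := by
        intro c a
        refine Prod.ext ?_ ?_
        · funext x
          rcases x with A | Q <;> simp [Finset.mul_sum]
        · funext i
          simp }
  have hninj : ¬ Function.Injective Φ := by
    intro hinj
    have hd1 := LinearMap.finrank_le_finrank_of_injective hinj
    rw [Module.finrank_pi, Module.finrank_prod, Module.finrank_pi, Module.finrank_pi,
      Fintype.card_sum, Fintype.card_coe, Fintype.card_coe, Fintype.card_coe] at hd1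
    have hK : K.card = Fintype.card F - Frac.card := by
      rw [hKDef, Finset.card_sdiff_of_subset (Finset.subset_univ _), Finset.card_univ]
    have hFr_le : Frac.card ≤ Fintype.card F := by
      rw [← Finset.card_univ]
      exact Finset.card_le_card (Finset.subset_univ _)
    have hfl_le : (Frac.filter HasL).card ≤ Frac.card :=
      Finset.card_le_card (Finset.filter_subset _ _)
    have hfr_le : (R'.biUnion (fun Q => Q ∩ Frac)).card ≤ Frac.card :=
      Finset.card_le_card hRbiUnion_sub
    rw [hLsum] at h2L
    rw [hRsum] at h2R
    -- equalities forced
    have hcov1 : Frac.filter HasL = Frac :=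
      Finset.eq_of_subset_of_card_le (Finset.filter_subset _ _) (by omega)
    have hcov2 : R'.biUnion (fun Q => Q ∩ Frac) = Frac :=
      Finset.eq_of_subset_of_card_le hRbiUnion_sub (by omega)
    have hLRcard : L.card + R'.card = Frac.card := by omega
    have hLne : L.Nonempty := by
      obtain ⟨i0, hi0⟩ := hne
      have hi0' : i0 ∈ Frac.filter HasL := by rw [hcov1]; exact hi0
      exact ⟨Ti i0, Finset.mem_image_of_mem Ti hi0'⟩
    obtain ⟨A0, hA0⟩ := hLne
    let ψ : ((↥L ⊕ ↥R' → ℝ) × (↥K → ℝ)) →ₗ[ℝ] ℝ :=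
      { toFun := fun p => (∑ A : ↥L, p.1 (Sum.inl A)) - ∑ Q : ↥R', p.1 (Sum.inr Q),
        map_add' := by
          intro a b
          simp only [Prod.fst_add, Pi.add_apply, Finset.sum_add_distrib]
          ring,
        map_smul' := by
          intro c a
          simp only [Prod.smul_fst, Pi.smul_apply, smul_eq_mul, RingHom.id_apply,
            ← Finset.mul_sum]
          ring }
    have hψΦ : ∀ w : F → ℝ, ψ (Φ w) = 0 := by
      intro w
      have hL1 : (∑ A : ↥L, ∑ i ∈ ClassL ↑A, w i) = ∑ i ∈ Frac, w i := by
        rw [Finset.sum_coe_sort L (fun A => ∑ i ∈ ClassL A, w i),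
          ← Finset.sum_biUnion (fun A _ B _ hAB => hClassL_disj A B hAB),
          hLbiUnion, hcov1]
      have hR1 : (∑ Q : ↥R', ∑ i ∈ (↑Q : Finset F) ∩ Frac, w i) = ∑ i ∈ Frac, w i := by
        rw [Finset.sum_coe_sort R' (fun Q => ∑ i ∈ Q ∩ Frac, w i),
          ← Finset.sum_biUnion (fun Q hQ Q' hQ' hne' => hR'disj Q hQ Q' hQ' hne'),
          hcov2]
      show (∑ A : ↥L, ∑ i ∈ ClassL ↑A, w i)
        - (∑ Q : ↥R', ∑ i ∈ (↑Q : Finset F) ∩ Frac, w i) = 0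
      rw [hL1, hR1, sub_self]
    have hmemker : ∀ w, Φ w ∈ LinearMap.ker ψ := fun w => LinearMap.mem_ker.mpr (hψΦ w)
    let Φ' := Φ.codRestrict (LinearMap.ker ψ) hmemker
    have hinj' : Function.Injective Φ' := by
      intro a b hab
      exact hinj (congrArg Subtype.val hab)
    have hd2 := LinearMap.finrank_le_finrank_of_injective hinj'
    have hψsurj : Function.Surjective ψ := by
      intro c
      refine ⟨((fun x => if x = Sum.inl ⟨A0, hA0⟩ then c else 0), 0), ?_⟩
      show (∑ A : ↥L, if (Sum.inl A : ↥L ⊕ ↥R') = Sum.inl ⟨A0, hA0⟩ then c else 0)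
        - (∑ Q : ↥R', if (Sum.inr Q : ↥L ⊕ ↥R') = Sum.inl ⟨A0, hA0⟩ then c else 0) = c
      simp
    have hrk := LinearMap.finrank_range_add_finrank_ker ψ
    rw [LinearMap.range_eq_top.mpr hψsurj, finrank_top, Module.finrank_self] at hrk
    rw [Module.finrank_prod, Module.finrank_pi, Module.finrank_pi,
      Fintype.card_sum, Fintype.card_coe, Fintype.card_coe, Fintype.card_coe] at hrk
    rw [Module.finrank_pi] at hd2
    have hK : K.card = Fintype.card F - Frac.card := by
      rw [hKDef, Finset.card_sdiff_of_subset (Finset.subset_univ _), Finset.card_univ]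
    have hFr_le2 : Frac.card ≤ Fintype.card F := by
      rw [← Finset.card_univ]
      exact Finset.card_le_card (Finset.subset_univ _)
    have hFrne : 1 ≤ Frac.card := Finset.card_pos.mpr hne
    omega
  rw [Function.not_injective_iff] at hninj
  obtain ⟨a, b, hab, habne⟩ := hninj
  set w : F → ℝ := a - b with hwDef
  have hΦw : Φ w = 0 := by
    rw [hwDef, map_sub, sub_eq_zero]
    exact hab
  have hwne : w ≠ 0 := sub_ne_zero.mpr habne
  have hcomp1 : ∀ A ∈ L, ∑ i ∈ ClassL A, w i = 0 := by
    intro A hA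
    have h := congrFun (congrArg Prod.fst hΦw) (Sum.inl ⟨A, hA⟩)
    exact h
  have hcomp2 : ∀ Q ∈ R', ∑ i ∈ Q ∩ Frac, w i = 0 := by
    intro Q hQ
    have h := congrFun (congrArg Prod.fst hΦw) (Sum.inr ⟨Q, hQ⟩)
    exact h
  have hcomp3 : ∀ i, i ∉ Frac → w i = 0 := by
    intro i hi
    have hiK : i ∈ K := Finset.mem_sdiff.mpr ⟨Finset.mem_univ _, hi⟩
    have h := congrFun (congrArg Prod.snd hΦw) ⟨i, hiK⟩
    exact h
  have hsupp : ∀ s : Finset F, ∑ i ∈ s, w i = ∑ i ∈ s ∩ Frac, w i := by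
    intro s
    refine (Finset.sum_subset Finset.inter_subset_left ?_).symm
    intro x hx hx'
    apply hcomp3
    intro hxF
    exact hx' (Finset.mem_inter.mpr ⟨hx, hxF⟩)
  refine ⟨w, hwne, ?_, ?_, ?_, ?_⟩
  · intro i hvi
    apply hcomp3
    rw [hFracMem]
    intro hnot
    exact hnot (by rw [hvi]; exact hi_zero)
  · intro S hS
    rw [hsupp S]
    have hSF : S ∩ Frac = (L.filter (fun A => A ⊆ S)).biUnion ClassL := by
      ext i
      simp only [Finset.mem_inter, Finset.mem_biUnion, Finset.mem_filter]
      constructor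
      · rintro ⟨hiS, hiF⟩
        have hLi : HasL i := ⟨S, hS, hiS⟩
        exact ⟨Ti i, ⟨Finset.mem_image_of_mem Ti (Finset.mem_filter.mpr ⟨hiF, hLi⟩),
          (hTi i hLi).2.2 S hS hiS⟩, hmemClassL i hiF hLi⟩
      · rintro ⟨A, ⟨hAL, hAS⟩, hi⟩
        have hi' := Finset.mem_filter.mp (by simpa only [hClassLDef] using hi)
        refine ⟨hAS ?_, hi'.1⟩
        rw [← hi'.2.2]
        exact (hTi i hi'.2.1).2.1
    rw [hSF, Finset.sum_biUnion (fun A _ B _ hAB => hClassL_disj A B hAB)]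
    apply Finset.sum_eq_zero
    intro A hA
    exact hcomp1 A (Finset.mem_filter.mp hA).1
  · intro j hj
    rw [hsupp (F' j)]
    by_cases hne' : ((F' j) ∩ Frac).Nonempty
    · apply hcomp2
      refine Finset.mem_filter.mpr ⟨?_, hne'⟩
      rw [hRDef]
      exact Finset.mem_union_left _
        (Finset.mem_image_of_mem F' (Finset.mem_filter.mpr ⟨Finset.mem_univ _, hj⟩))
    · rw [Finset.not_nonempty_iff_eq_empty.mp hne', Finset.sum_empty]
  · intro j hj
    have hP2row : ∑ i ∈ P2 j, w i = 0 := by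
      rw [hsupp (P2 j)]
      by_cases hne' : ((P2 j) ∩ Frac).Nonempty
      · apply hcomp2
        refine Finset.mem_filter.mpr ⟨?_, hne'⟩
        rw [hRDef]
        exact Finset.mem_union_right _
          (Finset.mem_image_of_mem P2 (Finset.mem_filter.mpr ⟨Finset.mem_univ _, hj⟩))
      · rw [Finset.not_nonempty_iff_eq_empty.mp hne', Finset.sum_empty]
    by_cases htFj : tF j
    · have hFrow : ∑ i ∈ F' j, w i = 0 := by
        rw [hsupp (F' j)]
        by_cases hne' : ((F' j) ∩ Frac).Nonempty
        · apply hcomp2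
          refine Finset.mem_filter.mpr ⟨?_, hne'⟩
          rw [hRDef]
          exact Finset.mem_union_left _
            (Finset.mem_image_of_mem F' (Finset.mem_filter.mpr ⟨Finset.mem_univ _, htFj⟩))
        · rw [Finset.not_nonempty_iff_eq_empty.mp hne', Finset.sum_empty]
      have hsplit := Finset.sum_sdiff (f := w) (hFG j)
      have hP2eq : P2 j = G j \ F' j := by simp only [hP2Def, if_pos htFj]
      rw [hP2eq] at hP2row
      linarith
    · have hP2eq : P2 j = G j := by simp only [hP2Def, if_neg htFj]
      rw [hP2eq] at hP2row
      exact hP2row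


/-- Every extreme point of the polytope `𝒫` is half-integral. -/
theorem polytope_P_half_integral
    {F D : Type*} [Fintype F] [Fintype D]
    (M : Matroid F) (hME : M.E = Set.univ)
    (F' G : D → Finset F)
    (hFG : ∀ j, F' j ⊆ G j)
    (hdisj : ∀ j k, j ≠ k → Disjoint (G j) (G k))
    (P : Set (F → ℝ))
    (hP : P = {v | (∀ i, 0 ≤ v i) ∧
      (∀ S : Finset F, ∑ i ∈ S, v i ≤ (matroidRank M S : ℝ)) ∧
      (∀ j, (1/2 : ℝ) ≤ ∑ i ∈ F' j, v i ∧ ∑ i ∈ G j, v i ≤ 1)}) :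
    ∀ v ∈ P.extremePoints ℝ, ∀ i, v i ∈ ({0, 1/2, 1} : Set ℝ) := by
  intro v hv i
  rw [mem_extremePoints] at hv
  obtain ⟨hvP, hext⟩ := hv
  rw [hP] at hvP
  obtain ⟨hv0, hvr, hvFG⟩ := hvP
  have hext' : ∀ x₁ x₂ : F → ℝ,
      ((∀ i, 0 ≤ x₁ i) ∧ (∀ S : Finset F, ∑ i ∈ S, x₁ i ≤ (matroidRank M S : ℝ)) ∧
        (∀ j, (1/2 : ℝ) ≤ ∑ i ∈ F' j, x₁ i ∧ ∑ i ∈ G j, x₁ i ≤ 1)) →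
      ((∀ i, 0 ≤ x₂ i) ∧ (∀ S : Finset F, ∑ i ∈ S, x₂ i ≤ (matroidRank M S : ℝ)) ∧
        (∀ j, (1/2 : ℝ) ≤ ∑ i ∈ F' j, x₂ i ∧ ∑ i ∈ G j, x₂ i ≤ 1)) →
      v ∈ openSegment ℝ x₁ x₂ → x₁ = v ∧ x₂ = v := by
    intro x₁ x₂ h1 h2 hseg
    exact hext x₁ (by rw [hP]; exact h1) x₂ (by rw [hP]; exact h2) hseg
  have hHI : ∀ i, HIx (v i) := by
    by_contra hnot
    push_neg at hnot
    obtain ⟨i0, hi0⟩ := hnot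
    have hne : (Finset.univ.filter (fun i => ¬ HIx (v i))).Nonempty :=
      ⟨i0, Finset.mem_filter.mpr ⟨Finset.mem_univ _, hi0⟩⟩
    obtain ⟨w, hwne, h1, h2, h3, h4⟩ := exists_good_w M F' G hFG hdisj v hv0 hvr hvFG hne
    exact hwne (extreme_w_zero M F' G v hv0 hvr hvFG hext' w h1 h2 h3 h4)
  have h1 : 0 ≤ v i := hv0 i
  have h2 : v i ≤ 1 := by
    have hle := hvr {i}
    rw [Finset.sum_singleton] at hle
    have hr := rank_singleton_le M i
    calc v i ≤ (matroidRank M {i} : ℝ) := hle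
    _ ≤ 1 := by exact_mod_cast hr
  obtain ⟨n, hn⟩ := hHI i
  have hn0 : (0:ℤ) ≤ n := by
    have : (0:ℝ) ≤ (n:ℝ) := by linarith
    exact_mod_cast this
  have hn2 : n ≤ 2 := by
    have : ((n:ℝ)) ≤ 2 := by linarith
    exact_mod_cast this
  simp only [Set.mem_insert_iff, Set.mem_singleton_iff]
  interval_cases n
  · left
    norm_num at hn
    linarith
  · right; left
    norm_num at hn
    linarith
  · right; right
    norm_num at hn
    linarith
end

section
/- Let j, k, i'', ℓ, i' be points of X and let C̄_j, C̄_k ≥ 0 be reals such that c(j,k) ≥ 4·max(C̄_j, C̄_k), c(i'',k) ≤ c(i'',j), c(ℓ,k) ≤ 2·C̄_k, and c(i',j) ≤ c(ℓ,j). Then c(i',j) ≤ 3·c(i'',j). -/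
/-- A metric-space inequality used in bounding the secondary-facility distance
(end of the proof of Lemma 3.2). -/
theorem secondary_facility_distance_bound
    {X : Type*} (c : X → X → ℝ)
    (hc_nonneg : ∀ u v, 0 ≤ c u v)
    (hc_symm : ∀ u v, c u v = c v u)
    (hc_tri : ∀ u v w, c u w ≤ c u v + c v w)
    (j k i'' ℓ i' : X) (Cj Ck : ℝ)
    (hCj : 0 ≤ Cj) (hCk : 0 ≤ Ck)
    (h1 : 4 * max Cj Ck ≤ c j k)
    (h2 : c i'' k ≤ c i'' j)
    (h3 : c ℓ k ≤ 2 * Ck)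
    (h4 : c i' j ≤ c ℓ j) :
    c i' j ≤ 3 * c i'' j := by
  have t1 := hc_tri j i'' k
  have t2 := hc_tri ℓ k j
  have hCk' : Ck ≤ max Cj Ck := le_max_right _ _
  have s1 := hc_symm j i''
  have s2 := hc_symm ℓ j
  have s3 := hc_symm k j
  linarith
end

section
/- Assume additionally that: the sets S_j for j ∈ D' are pairwise disjoint; ŷ : 𝓕 → {0, 1/2, 1} satisfies ŷ_i ≥ 1/2 for every i ∈ S_k (k ∈ D) and ŷ_{i₁(k)} = 1 whenever i₁(k) = i₂(k); writing Ĉ_k = (c(i₁(k),k) + c(i₂(k),k))/2, for every k ∈ D one has Ĉ_{ctr(k)} ≤ Ĉ_k and S_{ctr(k)} ∩ S_k ≠ ∅. Define ŷ'_i = 1/2 if i ∈ S_j for some j ∈ D' with i₁(j) ≠ i₂(j), ŷ'_i = 1 if i = i₁(j) = i₂(j) for some j ∈ D', and ŷ'_i = ŷ_i otherwise. Then H(ŷ') ≤ 2·(∑_{i∈𝓕} f_i ŷ_i + ∑_{k∈D} d'_k Ĉ_k). -/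
open scoped Classical
open Finset

/-- The pair of candidate facilities `S_k = {i₁(k), i₂(k)}` of a client. -/
def Sset {F D : Type*} [DecidableEq F] (i1 i2 : D → F) (k : D) : Finset F :=
  {i1 k, i2 k}

/-- The linear function `A_k(z)` from Step IV of the rounding procedure. -/
noncomputable def Afun {F D : Type*} [Fintype F] [DecidableEq F]
    (c : F ⊕ D → F ⊕ D → ℝ) (d' : D → ℝ) (i1 i2 : D → F) (ctr : D → D)
    (k : D) (z : F → ℝ) : ℝ :=
  if i1 k ∈ Sset i1 i2 (ctr k) then
    ∑ i ∈ Sset i1 i2 (ctr k), d' k * c (Sum.inl i) (Sum.inr k) * z i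
  else
    (∑ i ∈ Sset i1 i2 (ctr k), d' k * c (Sum.inl i) (Sum.inr k) * z i)
      + d' k * (c (Sum.inl (i1 k)) (Sum.inr k) - c (Sum.inl (i2 k)) (Sum.inr k))
        * z (i1 k)

/-- The linear function `H(z)` from Step IV of the rounding procedure. -/
noncomputable def Hfun {F D : Type*} [Fintype F] [Fintype D] [DecidableEq F]
    (c : F ⊕ D → F ⊕ D → ℝ) (f : F → ℝ) (d' : D → ℝ)
    (i1 i2 : D → F) (ctr : D → D) (z : F → ℝ) : ℝ :=
  (∑ i, f i * z i) + ∑ k, Afun c d' i1 i2 ctr k z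

/-- Lemma 3.4: `H(ŷ')` is at most twice the cost of the half-integral
solution `(x̂, ŷ)`. -/
theorem H_le_twice_half_integral_cost
    {F D : Type*} [Fintype F] [Fintype D] [DecidableEq F]
    (c : F ⊕ D → F ⊕ D → ℝ)
    (hc_nonneg : ∀ u v, 0 ≤ c u v)
    (hc_symm : ∀ u v, c u v = c v u)
    (hc_tri : ∀ u v w, c u w ≤ c u v + c v w)
    (f : F → ℝ) (hf : ∀ i, 0 ≤ f i)
    (d' : D → ℝ) (hd' : ∀ k, 0 ≤ d' k)
    (i1 i2 : D → F)
    (h12 : ∀ k, c (Sum.inl (i1 k)) (Sum.inr k) ≤ c (Sum.inl (i2 k)) (Sum.inr k))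
    (D' : Finset D) (ctr : D → D)
    (hctr_mem : ∀ k, ctr k ∈ D') (hctr_id : ∀ j ∈ D', ctr j = j)
    -- the clusters of the cluster centers are pairwise disjoint
    (hdisj : ∀ j ∈ D', ∀ j' ∈ D', j ≠ j' →
      Disjoint (Sset i1 i2 j) (Sset i1 i2 j'))
    (yhat : F → ℝ)
    (hyval : ∀ i, yhat i ∈ ({0, 1/2, 1} : Set ℝ))
    (hyhalf : ∀ k : D, ∀ i ∈ Sset i1 i2 k, (1/2 : ℝ) ≤ yhat i)
    (hyfull : ∀ k : D, i1 k = i2 k → yhat (i1 k) = 1)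
    (Chat : D → ℝ)
    (hChat : ∀ k, Chat k =
      (c (Sum.inl (i1 k)) (Sum.inr k) + c (Sum.inl (i2 k)) (Sum.inr k)) / 2)
    (hctrC : ∀ k, Chat (ctr k) ≤ Chat k)
    (hmeet : ∀ k, (Sset i1 i2 (ctr k) ∩ Sset i1 i2 k).Nonempty)
    (yhat' : F → ℝ)
    (hy'half : ∀ j ∈ D', i1 j ≠ i2 j → ∀ i ∈ Sset i1 i2 j, yhat' i = 1/2)
    (hy'one : ∀ j ∈ D', i1 j = i2 j → yhat' (i1 j) = 1)
    (hy'rest : ∀ i : F, (∀ j ∈ D', i ∉ Sset i1 i2 j) → yhat' i = yhat i) :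
    Hfun c f d' i1 i2 ctr yhat' ≤
      2 * ((∑ i, f i * yhat i) + ∑ k, d' k * Chat k) := by
  classical
  have h0 : ∀ i, (0:ℝ) ≤ yhat i := by
    intro i
    rcases hyval i with h | h | h <;> rw [h] <;> norm_num
  have hy'le : ∀ i, yhat' i ≤ yhat i := by
    intro i
    by_cases h : ∀ j ∈ D', i ∉ Sset i1 i2 j
    · rw [hy'rest i h]
    · push_neg at h
      obtain ⟨j, hj, hij⟩ := h
      by_cases he : i1 j = i2 j
      · have hi : i = i1 j := by
          simp only [Sset, ← he, Finset.mem_insert, Finset.mem_singleton, or_self] at hij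
          exact hij
        rw [hi, hy'one j hj he, hyfull j he]
      · rw [hy'half j hj he i hij]
        exact hyhalf j i hij
  have hy'ge : ∀ k : D, (1/2:ℝ) ≤ yhat' (i1 k) := by
    intro k
    by_cases h : ∀ j ∈ D', i1 k ∉ Sset i1 i2 j
    · rw [hy'rest _ h]
      exact hyhalf k (i1 k) (by simp [Sset])
    · push_neg at h
      obtain ⟨j, hj, hij⟩ := h
      by_cases he : i1 j = i2 j
      · have hi : i1 k = i1 j := by
          simp only [Sset, ← he, Finset.mem_insert, Finset.mem_singleton, or_self] at hij
          exact hij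
        rw [hi, hy'one j hj he]
        norm_num
      · rw [hy'half j hj he _ hij]
  have hA : ∀ k, Afun c d' i1 i2 ctr k yhat' ≤ 2 * (d' k * Chat k) := by
    intro k
    have hjD : ctr k ∈ D' := hctr_mem k
    have hab : c (Sum.inl (i1 k)) (Sum.inr k) ≤ c (Sum.inl (i2 k)) (Sum.inr k) := h12 k
    have ha0 : (0:ℝ) ≤ c (Sum.inl (i1 k)) (Sum.inr k) := hc_nonneg _ _
    have hb0 : (0:ℝ) ≤ c (Sum.inl (i2 k)) (Sum.inr k) := hc_nonneg _ _
    have hCk := hChat k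
    have hCj := hChat (ctr k)
    have hCjk := hctrC k
    have hd := hd' k
    have hyk := hy'ge k
    have tri : ∀ i i' : F, c (Sum.inl i) (Sum.inr k) ≤
        c (Sum.inl i) (Sum.inr (ctr k)) + c (Sum.inl i') (Sum.inr (ctr k))
          + c (Sum.inl i') (Sum.inr k) := by
      intro i i'
      have h1 := hc_tri (Sum.inl i) (Sum.inl i') (Sum.inr k)
      have h2 := hc_tri (Sum.inl i) (Sum.inr (ctr k)) (Sum.inl i')
      have h3 := hc_symm (Sum.inr (ctr k)) (Sum.inl i')
      linarith
    by_cases he : i1 (ctr k) = i2 (ctr k)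
    · -- singleton cluster
      have hS : Sset i1 i2 (ctr k) = {i1 (ctr k)} := by
        simp [Sset, ← he]
      have hy1 : yhat' (i1 (ctr k)) = 1 := hy'one _ hjD he
      by_cases hcond : i1 k ∈ Sset i1 i2 (ctr k)
      · have hik : i1 k = i1 (ctr k) := by
          rw [hS] at hcond
          exact Finset.mem_singleton.mp hcond
        rw [Afun, if_pos hcond, hS, Finset.sum_singleton, hy1, ← hik]
        nlinarith [mul_nonneg hd hb0]
      · obtain ⟨istar, his⟩ := hmeet k
        rw [Finset.mem_inter, hS] at his
        have h1 : istar = i1 (ctr k) := Finset.mem_singleton.mp his.1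
        have h2 : istar = i1 k ∨ istar = i2 k := by
          have := his.2
          simp only [Sset, Finset.mem_insert, Finset.mem_singleton] at this
          exact this
        have h2' : istar = i2 k := by
          rcases h2 with h2 | h2
          · exact absurd (by rw [← h2, h1, hS]; exact Finset.mem_singleton_self _) hcond
          · exact h2
        have hu : c (Sum.inl (i1 (ctr k))) (Sum.inr k) = c (Sum.inl (i2 k)) (Sum.inr k) := by
          rw [← h1, h2']
        rw [Afun, if_neg hcond, hS, Finset.sum_singleton, hy1, hu]
        nlinarith [mul_nonneg (mul_nonneg hd (sub_nonneg.mpr hab))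
            (by linarith : (0:ℝ) ≤ yhat' (i1 k) - 1/2),
          mul_nonneg hd (by linarith : (0:ℝ) ≤ c (Sum.inl (i1 k)) (Sum.inr k)
            + c (Sum.inl (i2 k)) (Sum.inr k))]
    · -- two-element cluster
      have hy1 : yhat' (i1 (ctr k)) = 1/2 :=
        hy'half _ hjD he _ (by simp [Sset])
      have hy2 : yhat' (i2 (ctr k)) = 1/2 :=
        hy'half _ hjD he _ (by simp [Sset])
      have hsum : ∑ i ∈ Sset i1 i2 (ctr k), d' k * c (Sum.inl i) (Sum.inr k) * yhat' i
          = d' k * c (Sum.inl (i1 (ctr k))) (Sum.inr k) * (1/2)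
            + d' k * c (Sum.inl (i2 (ctr k))) (Sum.inr k) * (1/2) := by
        rw [Sset, Finset.sum_pair he, hy1, hy2]
      have t12 := tri (i1 (ctr k)) (i2 (ctr k))
      have t21 := tri (i2 (ctr k)) (i1 (ctr k))
      by_cases hcond : i1 k ∈ Sset i1 i2 (ctr k)
      · rw [Afun, if_pos hcond, hsum]
        have h2 : i1 k = i1 (ctr k) ∨ i1 k = i2 (ctr k) := by
          simpa [Sset] using hcond
        rcases h2 with h2 | h2
        · rw [← h2] at t21 hCj ⊢
          nlinarith [mul_nonneg hd (by linarith :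
            (0:ℝ) ≤ 2 * c (Sum.inl (i1 k)) (Sum.inr k) + 2 * c (Sum.inl (i2 k)) (Sum.inr k)
              - c (Sum.inl (i1 k)) (Sum.inr k) - c (Sum.inl (i2 (ctr k))) (Sum.inr k))]
        · rw [← h2] at t12 hCj ⊢
          nlinarith [mul_nonneg hd (by linarith :
            (0:ℝ) ≤ 2 * c (Sum.inl (i1 k)) (Sum.inr k) + 2 * c (Sum.inl (i2 k)) (Sum.inr k)
              - c (Sum.inl (i1 (ctr k))) (Sum.inr k) - c (Sum.inl (i1 k)) (Sum.inr k))]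
      · obtain ⟨istar, his⟩ := hmeet k
        rw [Finset.mem_inter] at his
        have h2' : istar = i2 k := by
          have := his.2
          simp only [Sset, Finset.mem_insert, Finset.mem_singleton] at this
          rcases this with h | h
          · exact absurd (h ▸ his.1) hcond
          · exact h
        have h1 : istar = i1 (ctr k) ∨ istar = i2 (ctr k) := by
          have := his.1
          simpa [Sset] using this
        rw [Afun, if_neg hcond, hsum]
        have key := mul_nonneg (mul_nonneg hd (sub_nonneg.mpr hab))
            (by linarith : (0:ℝ) ≤ yhat' (i1 k) - 1/2)
        rcases h1 with h1 | h1
        · have hu : c (Sum.inl (i1 (ctr k))) (Sum.inr k) = c (Sum.inl (i2 k)) (Sum.inr k) := by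
            rw [← h1, h2']
          rw [hu] at t21 ⊢
          nlinarith [key, mul_nonneg hd (by linarith :
            (0:ℝ) ≤ c (Sum.inl (i1 k)) (Sum.inr k) + 3 * c (Sum.inl (i2 k)) (Sum.inr k)
              - c (Sum.inl (i2 k)) (Sum.inr k) - c (Sum.inl (i2 (ctr k))) (Sum.inr k))]
        · have hu : c (Sum.inl (i2 (ctr k))) (Sum.inr k) = c (Sum.inl (i2 k)) (Sum.inr k) := by
            rw [← h1, h2']
          rw [hu] at t12 ⊢
          nlinarith [key, mul_nonneg hd (by linarith :
            (0:ℝ) ≤ c (Sum.inl (i1 k)) (Sum.inr k) + 3 * c (Sum.inl (i2 k)) (Sum.inr k)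
              - c (Sum.inl (i1 (ctr k))) (Sum.inr k) - c (Sum.inl (i2 k)) (Sum.inr k))]
  have hsum1 : ∑ i, f i * yhat' i ≤ ∑ i, f i * yhat i :=
    Finset.sum_le_sum fun i _ => mul_le_mul_of_nonneg_left (hy'le i) (hf i)
  have hsum2 : ∑ k, Afun c d' i1 i2 ctr k yhat' ≤ ∑ k, 2 * (d' k * Chat k) :=
    Finset.sum_le_sum fun k _ => hA k
  have hfy : (0:ℝ) ≤ ∑ i, f i * yhat i :=
    Finset.sum_nonneg fun i _ => mul_nonneg (hf i) (h0 i)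
  have hms : ∑ k : D, 2 * (d' k * Chat k) = 2 * ∑ k : D, d' k * Chat k := by
    rw [Finset.mul_sum]
  rw [Hfun]
  linarith
end

section
/- Every extreme point v of the polytope 𝒫' is half-integral, i.e., v_i ∈ {0, 1/2, 1} for every i ∈ 𝓕'. -/
open scoped Classical
open Finset

section Rank
variable {α : Type*} {M : Matroid α} {S A B : Finset α}

lemma card_le_rank (hI : (I : Finset α) ⊆ S) (h : M.Indep ↑I) : I.card ≤ matroidRank M S :=
  Finset.le_sup (by simp [Finset.mem_filter, Finset.mem_powerset, hI, h])

lemma mr_le (n : ℕ) (h : ∀ I : Finset α, I ⊆ S → M.Indep ↑I → I.card ≤ n) :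
    matroidRank M S ≤ n := by
  apply Finset.sup_le
  intro I hI
  simp only [Finset.mem_filter, Finset.mem_powerset] at hI
  exact h I hI.1 hI.2

lemma mr_le_card : matroidRank M S ≤ S.card :=
  mr_le _ (fun I hI _ => Finset.card_le_card hI)

@[simp] lemma rank_empty : matroidRank M (∅ : Finset α) = 0 :=
  Nat.le_antisymm (by simpa using mr_le_card (M := M) (S := (∅ : Finset α))) (Nat.zero_le _)

lemma exists_basis_finset (hE : M.E = Set.univ) (S : Finset α) :
    ∃ J : Finset α, J ⊆ S ∧ M.IsBasis ↑J ↑S ∧ J.card = matroidRank M S := by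
  obtain ⟨J, hJ⟩ := M.exists_isBasis (↑S) (by rw [hE]; exact Set.subset_univ _)
  have hJfin : J.Finite := (S.finite_toSet).subset hJ.subset
  refine ⟨hJfin.toFinset, ?_, ?_, ?_⟩
  · intro x hx
    simpa using hJ.subset (by simpa using hx)
  · convert hJ
    simp
  · apply Nat.le_antisymm
    · exact card_le_rank (by intro x hx; simpa using hJ.subset (by simpa using hx))
        (by rw [Set.Finite.coe_toFinset]; exact hJ.indep)
    · apply mr_le
      intro I hIS hIindep
      obtain ⟨J', hJ', hIJ'⟩ := hIindep.subset_isBasis_of_subset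
        (by exact_mod_cast Finset.coe_subset.2 hIS)
        (by rw [hE]; exact Set.subset_univ _)
      have h1 : (M.restrict (↑S : Set α)).IsBase J' := hJ'.restrict_isBase
      have h2 : (M.restrict (↑S : Set α)).IsBase J := hJ.restrict_isBase
      have hcard : J'.encard = J.encard :=
        (M.restrict (↑S : Set α)).isBase_exchange.encard_isBase_eq h1 h2
      have : (↑I : Set α).encard ≤ J.encard := by
        rw [← hcard]
        exact Set.encard_le_encard hIJ'
      rwa [Set.encard_coe_eq_coe_finsetCard, hJfin.encard_eq_coe_toFinset_card,
        Nat.cast_le] at this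

lemma rank_submodular [DecidableEq α] (hE : M.E = Set.univ) (A B : Finset α) :
    matroidRank M (A ∪ B) + matroidRank M (A ∩ B) ≤ matroidRank M A + matroidRank M B := by
  obtain ⟨I, hIsub, hIbasis, hIcard⟩ := exists_basis_finset hE (A ∩ B)
  obtain ⟨J, hJ, hIJ⟩ := hIbasis.indep.subset_isBasis_of_subset
    (show (↑I : Set α) ⊆ ↑(A ∪ B) by
      exact_mod_cast Finset.coe_subset.2 (hIsub.trans (Finset.inter_subset_left.trans
        Finset.subset_union_left)))
    (by rw [hE]; exact Set.subset_univ _)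
  have hJfin : J.Finite := ((A ∪ B).finite_toSet).subset hJ.subset
  set Jf := hJfin.toFinset with hJf
  have hJfS : Jf ⊆ A ∪ B := by
    intro x hx; simpa using hJ.subset (by simpa [hJf] using hx)
  have hJfindep : M.Indep ↑Jf := by
    rw [hJf, Set.Finite.coe_toFinset]; exact hJ.indep
  have hIJf : I ⊆ Jf := by
    intro x hx; simp only [hJf, Set.Finite.mem_toFinset]; exact hIJ (by simpa using hx)
  -- rank (A ∪ B) ≤ Jf.card
  have hrAB : matroidRank M (A ∪ B) ≤ Jf.card := by
    obtain ⟨K, hKsub, hKbasis, hKcard⟩ := exists_basis_finset hE (A ∪ B)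
    rw [← hKcard]
    have h1 : (M.restrict (↑(A ∪ B) : Set α)).IsBase ↑K := hKbasis.restrict_isBase
    have h2 : (M.restrict (↑(A ∪ B) : Set α)).IsBase J := hJ.restrict_isBase
    have hcard : (↑K : Set α).encard = J.encard :=
      (M.restrict (↑(A ∪ B) : Set α)).isBase_exchange.encard_isBase_eq h1 h2
    rw [Set.encard_coe_eq_coe_finsetCard, hJfin.encard_eq_coe_toFinset_card] at hcard
    exact_mod_cast hcard.le
  have hA : (Jf ∩ A).card ≤ matroidRank M A :=
    card_le_rank Finset.inter_subset_right (hJfindep.subset (by simp))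
  have hB : (Jf ∩ B).card ≤ matroidRank M B :=
    card_le_rank Finset.inter_subset_right (hJfindep.subset (by simp))
  have hIC : I ⊆ Jf ∩ (A ∩ B) := Finset.subset_inter hIJf hIsub
  have hsplit : (Jf ∩ A).card + (Jf ∩ B).card
      = (Jf ∩ (A ∪ B)).card + (Jf ∩ (A ∩ B)).card := by
    have e1 : (Jf ∩ A) ∪ (Jf ∩ B) = Jf ∩ (A ∪ B) := by
      ext x; simp only [Finset.mem_inter, Finset.mem_union]; tauto
    have e2 : (Jf ∩ A) ∩ (Jf ∩ B) = Jf ∩ (A ∩ B) := by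
      ext x; simp only [Finset.mem_inter]; tauto
    rw [← Finset.card_union_add_card_inter, e1, e2]
  have hJfAB : Jf ∩ (A ∪ B) = Jf := Finset.inter_eq_left.2 hJfS
  have : matroidRank M (A ∪ B) + matroidRank M (A ∩ B)
      ≤ (Jf ∩ (A ∪ B)).card + (Jf ∩ (A ∩ B)).card := by
    rw [hJfAB]
    apply Nat.add_le_add hrAB
    rw [← hIcard]
    exact Finset.card_le_card hIC
  omega

end Rank


def HalfInt (x : ℝ) : Prop := ∃ k : ℤ, x = k / 2

lemma HalfInt.zero : HalfInt 0 := ⟨0, by norm_num⟩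

lemma HalfInt.intCast (k : ℤ) : HalfInt (k : ℝ) := ⟨2 * k, by push_cast; ring⟩

lemma HalfInt.natCast (n : ℕ) : HalfInt (n : ℝ) := by exact_mod_cast HalfInt.intCast n

lemma HalfInt.half : HalfInt (1 / 2 : ℝ) := ⟨1, by norm_num⟩

lemma HalfInt.one : HalfInt (1 : ℝ) := ⟨2, by norm_num⟩

lemma HalfInt.sub {x y : ℝ} (hx : HalfInt x) (hy : HalfInt y) : HalfInt (x - y) := by
  obtain ⟨k, rfl⟩ := hx; obtain ⟨l, rfl⟩ := hy
  exact ⟨k - l, by push_cast; ring⟩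

lemma HalfInt.sum {ι : Type*} (s : Finset ι) (f : ι → ℝ) (h : ∀ i ∈ s, HalfInt (f i)) :
    HalfInt (∑ i ∈ s, f i) := by
  induction s using Finset.induction with
  | empty => simpa using HalfInt.zero
  | insert _ _ hx ih =>
    rename_i a s
    rw [Finset.sum_insert hx]
    obtain ⟨k, hk⟩ := h a (Finset.mem_insert_self a s)
    obtain ⟨l, hl⟩ := ih (fun i hi => h i (Finset.mem_insert_of_mem hi))
    exact ⟨k + l, by rw [hk, hl]; push_cast; ring⟩

/-- Generic lemma: at an extreme point of a polyhedron given by `≤` and `≥`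
constraints over finitely many 0-1 rows, any direction `w` orthogonal to all
tight rows must vanish. -/
lemma extreme_tight {E ι κ : Type*} [Fintype E] [Fintype ι] [Fintype κ]
    (T : ι → Finset E) (b : ι → ℝ) (T' : κ → Finset E) (b' : κ → ℝ)
    (P : Set (E → ℝ))
    (hP : P = {x | (∀ c, ∑ i ∈ T c, x i ≤ b c) ∧ (∀ c, b' c ≤ ∑ i ∈ T' c, x i)})
    (v : E → ℝ) (hv : v ∈ P.extremePoints ℝ) (w : E → ℝ)
    (hw1 : ∀ c, ∑ i ∈ T c, v i = b c → ∑ i ∈ T c, w i = 0)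
    (hw2 : ∀ c, ∑ i ∈ T' c, v i = b' c → ∑ i ∈ T' c, w i = 0) : w = 0 := by
  obtain ⟨hvP, hext⟩ := hv
  rw [hP] at hvP
  obtain ⟨hvP1, hvP2⟩ := hvP
  -- candidate epsilons
  set cand : Finset ℝ :=
    insert 1 (((Finset.univ.filter (fun c : ι => ∑ i ∈ T c, v i < b c)).image
        (fun c => (b c - ∑ i ∈ T c, v i) / (|∑ i ∈ T c, w i| + 1))) ∪
      ((Finset.univ.filter (fun c : κ => b' c < ∑ i ∈ T' c, v i)).image
        (fun c => ((∑ i ∈ T' c, v i) - b' c) / (|∑ i ∈ T' c, w i| + 1)))) with hcand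
  have hne : cand.Nonempty := ⟨1, Finset.mem_insert_self _ _⟩
  set ε : ℝ := cand.min' hne with hε
  have hεpos : 0 < ε := by
    have := cand.min'_mem hne
    rw [← hε] at this
    rw [hcand] at this
    simp only [Finset.mem_insert, Finset.mem_union, Finset.mem_image,
      Finset.mem_filter] at this
    rcases this with h | ⟨c, ⟨_, hc⟩, heq⟩ | ⟨c, ⟨_, hc⟩, heq⟩
    · rw [h]; norm_num
    · rw [← heq]; apply div_pos (by linarith) (by positivity)
    · rw [← heq]; apply div_pos (by linarith) (by positivity)
  -- the two perturbed points are in P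
  have hkey : ∀ (s : ℝ), |s| = 1 → (fun i => v i + s * ε * w i) ∈ P := by
    intro s hs
    rw [hP]
    constructor
    · intro c
      rw [Finset.sum_add_distrib, ← Finset.mul_sum]
      rcases eq_or_lt_of_le (hvP1 c) with htight | hslack
      · rw [hw1 c htight, mul_zero, add_zero]; exact le_of_eq htight
      · have hεle : ε ≤ (b c - ∑ i ∈ T c, v i) / (|∑ i ∈ T c, w i| + 1) := by
          apply Finset.min'_le
          rw [hcand]
          apply Finset.mem_insert_of_mem
          apply Finset.mem_union_left
          exact Finset.mem_image_of_mem _ (Finset.mem_filter.2 ⟨Finset.mem_univ _, hslack⟩)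
        have habs : |s * ε * ∑ i ∈ T c, w i| ≤ b c - ∑ i ∈ T c, v i := by
          rw [abs_mul, abs_mul, hs, one_mul, abs_of_pos hεpos]
          calc ε * |∑ i ∈ T c, w i|
              ≤ ((b c - ∑ i ∈ T c, v i) / (|∑ i ∈ T c, w i| + 1)) * |∑ i ∈ T c, w i| := by
                apply mul_le_mul_of_nonneg_right hεle (abs_nonneg _)
            _ ≤ b c - ∑ i ∈ T c, v i := by
                rw [div_mul_eq_mul_div, div_le_iff₀ (by positivity)]
                nlinarith [abs_nonneg (∑ i ∈ T c, w i)]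
        have := (abs_le.1 habs).2
        linarith
    · intro c
      rw [Finset.sum_add_distrib, ← Finset.mul_sum]
      rcases eq_or_lt_of_le (hvP2 c) with htight | hslack
      · rw [hw2 c htight.symm, mul_zero, add_zero]; exact le_of_eq htight
      · have hεle : ε ≤ ((∑ i ∈ T' c, v i) - b' c) / (|∑ i ∈ T' c, w i| + 1) := by
          apply Finset.min'_le
          rw [hcand]
          apply Finset.mem_insert_of_mem
          apply Finset.mem_union_right
          exact Finset.mem_image_of_mem _ (Finset.mem_filter.2 ⟨Finset.mem_univ _, hslack⟩)
        have habs : |s * ε * ∑ i ∈ T' c, w i| ≤ (∑ i ∈ T' c, v i) - b' c := by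
          rw [abs_mul, abs_mul, hs, one_mul, abs_of_pos hεpos]
          calc ε * |∑ i ∈ T' c, w i|
              ≤ (((∑ i ∈ T' c, v i) - b' c) / (|∑ i ∈ T' c, w i| + 1)) * |∑ i ∈ T' c, w i| := by
                apply mul_le_mul_of_nonneg_right hεle (abs_nonneg _)
            _ ≤ (∑ i ∈ T' c, v i) - b' c := by
                rw [div_mul_eq_mul_div, div_le_iff₀ (by positivity)]
                nlinarith [abs_nonneg (∑ i ∈ T' c, w i)]
        have := (abs_le.1 habs).1
        linarith
  have h1 : (fun i => v i + 1 * ε * w i) ∈ P := hkey 1 (by norm_num)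
  have h2 : (fun i => v i + (-1) * ε * w i) ∈ P := hkey (-1) (by norm_num)
  have hseg : v ∈ openSegment ℝ (fun i => v i + (-1) * ε * w i) (fun i => v i + 1 * ε * w i) := by
    refine ⟨1/2, 1/2, by norm_num, by norm_num, by norm_num, ?_⟩
    funext i
    simp only [Pi.add_apply, Pi.smul_apply, smul_eq_mul]
    ring
  have heq2 := hext h2 h1 hseg
  funext i
  have := congrFun heq2 i
  simp only [Pi.zero_apply] at this ⊢
  nlinarith [hεpos]
/-- KEY: a vector whose sums over the members of two subpartitions are
half-integral, and which is determined on `U` by those sums, is half-integral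
on `U`. -/
lemma key_subpartition {E : Type*} [DecidableEq E] [Fintype E] (N : ℕ) :
    ∀ (U : Finset E) (P1 P2 : Finset (Finset E)) (v : E → ℝ),
    U.card + P1.card + P2.card ≤ N →
    (∀ S ∈ P1, S ⊆ U) → (∀ S ∈ P2, S ⊆ U) →
    (∀ S ∈ P1, ∀ T ∈ P1, S ≠ T → Disjoint S T) →
    (∀ S ∈ P2, ∀ T ∈ P2, S ≠ T → Disjoint S T) →
    (∀ w : E → ℝ, (∀ S ∈ P1, ∑ i ∈ S, w i = 0) → (∀ S ∈ P2, ∑ i ∈ S, w i = 0) →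
      ∀ i ∈ U, w i = 0) →
    (∀ S ∈ P1, HalfInt (∑ i ∈ S, v i)) → (∀ S ∈ P2, HalfInt (∑ i ∈ S, v i)) →
    ∀ i ∈ U, HalfInt (v i) := by
  induction N with
  | zero =>
    intro U P1 P2 v hN _ _ _ _ _ _ _ i hi
    have : U.card = 0 := by omega
    rw [Finset.card_eq_zero] at this
    subst this
    simp at hi
  | succ N IH =>
    intro U P1 P2 v hN hsub1 hsub2 hdisj1 hdisj2 huniq hhalf1 hhalf2
    -- the symmetric "step" for when there is a small member in the first family
    have step : ∀ (Q1 Q2 : Finset (Finset E)),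
        Q1.card + Q2.card ≤ P1.card + P2.card →
        (∀ S ∈ Q1, S ⊆ U) → (∀ S ∈ Q2, S ⊆ U) →
        (∀ S ∈ Q1, ∀ T ∈ Q1, S ≠ T → Disjoint S T) →
        (∀ S ∈ Q2, ∀ T ∈ Q2, S ≠ T → Disjoint S T) →
        (∀ w : E → ℝ, (∀ S ∈ Q1, ∑ i ∈ S, w i = 0) → (∀ S ∈ Q2, ∑ i ∈ S, w i = 0) →
          ∀ i ∈ U, w i = 0) →
        (∀ S ∈ Q1, HalfInt (∑ i ∈ S, v i)) → (∀ S ∈ Q2, HalfInt (∑ i ∈ S, v i)) →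
        (∃ S ∈ Q1, S.card ≤ 1) →
        ∀ i ∈ U, HalfInt (v i) := by
      intro Q1 Q2 hm hs1 hs2 hd1 hd2 hu hh1 hh2 ⟨S, hSQ, hScard⟩
      rcases Nat.le_one_iff_eq_zero_or_eq_one.1 hScard with h0 | h1
      · -- S = ∅ : drop it
        rw [Finset.card_eq_zero] at h0
        subst h0
        refine IH U (Q1.erase ∅) Q2 v ?_ ?_ ?_ ?_ ?_ ?_ ?_ ?_
        · have h1 := Finset.card_erase_of_mem hSQ
          have h2 : 0 < Q1.card := Finset.card_pos.2 ⟨_, hSQ⟩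
          omega
        · exact fun S hS => hs1 S (Finset.mem_of_mem_erase hS)
        · exact hs2
        · exact fun S hS T hT => hd1 S (Finset.mem_of_mem_erase hS) T (Finset.mem_of_mem_erase hT)
        · exact hd2
        · intro w hw1 hw2
          apply hu w ?_ hw2
          intro T hT
          by_cases hTe : T = ∅
          · subst hTe; simp
          · exact hw1 T (Finset.mem_erase.2 ⟨hTe, hT⟩)
        · exact fun S hS => hh1 S (Finset.mem_of_mem_erase hS)
        · exact hh2
      · -- S = {i0}
        rw [Finset.card_eq_one] at h1
        obtain ⟨i0, rfl⟩ := h1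
        have hi0U : i0 ∈ U := hs1 _ hSQ (Finset.mem_singleton_self i0)
        have hv0 : HalfInt (v i0) := by
          have := hh1 _ hSQ
          simpa using this
        intro i hiU
        by_cases hii0 : i = i0
        · subst hii0; exact hv0
        -- otherwise use IH on the reduced system
        set U' := U.erase i0 with hU'
        set Q1' := (Q1.erase {i0}).image (fun T => T.erase i0) with hQ1'
        set Q2' := Q2.image (fun T => T.erase i0) with hQ2'
        refine IH U' Q1' Q2' v ?_ ?_ ?_ ?_ ?_ ?_ ?_ ?_ i (Finset.mem_erase.2 ⟨hii0, hiU⟩)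
        · have h1 : U'.card = U.card - 1 := by
            rw [hU']; exact Finset.card_erase_of_mem hi0U
          have h2 : Q1'.card ≤ (Q1.erase {i0}).card := by
            rw [hQ1']; exact Finset.card_image_le
          have h3 := Finset.card_erase_of_mem hSQ
          have h4 : Q2'.card ≤ Q2.card := by
            rw [hQ2']; exact Finset.card_image_le
          have h5 : (0:ℕ) < Q1.card := Finset.card_pos.2 ⟨_, hSQ⟩
          have h6 : (0:ℕ) < U.card := Finset.card_pos.2 ⟨_, hi0U⟩
          omega
        · intro T hT
          rw [hQ1'] at hT
          obtain ⟨T0, hT0, rfl⟩ := Finset.mem_image.1 hT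
          exact Finset.erase_subset_erase _ (hs1 _ (Finset.mem_of_mem_erase hT0))
        · intro T hT
          obtain ⟨T0, hT0, rfl⟩ := Finset.mem_image.1 hT
          exact Finset.erase_subset_erase _ (hs2 _ hT0)
        · intro A hA B hB hAB
          obtain ⟨A0, hA0, rfl⟩ := Finset.mem_image.1 hA
          obtain ⟨B0, hB0, rfl⟩ := Finset.mem_image.1 hB
          have : A0 ≠ B0 := fun h => hAB (by rw [h])
          exact Finset.disjoint_of_subset_left (Finset.erase_subset _ _)
            (Finset.disjoint_of_subset_right (Finset.erase_subset _ _)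
              (hd1 _ (Finset.mem_of_mem_erase hA0) _ (Finset.mem_of_mem_erase hB0) this))
        · intro A hA B hB hAB
          obtain ⟨A0, hA0, rfl⟩ := Finset.mem_image.1 hA
          obtain ⟨B0, hB0, rfl⟩ := Finset.mem_image.1 hB
          have : A0 ≠ B0 := fun h => hAB (by rw [h])
          exact Finset.disjoint_of_subset_left (Finset.erase_subset _ _)
            (Finset.disjoint_of_subset_right (Finset.erase_subset _ _)
              (hd2 _ hA0 _ hB0 this))
        · -- uniqueness transfers
          intro w hw1 hw2 j hj
          set w' := Function.update w i0 0 with hw'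
          have hagree : ∀ T : Finset E, ∑ x ∈ T.erase i0, w' x = ∑ x ∈ T.erase i0, w x := by
            intro T
            apply Finset.sum_congr rfl
            intro x hx
            have : x ≠ i0 := (Finset.mem_erase.1 hx).1
            simp [hw', Function.update_of_ne this]
          have hrow : ∀ T : Finset E, ∑ x ∈ T, w' x = ∑ x ∈ T.erase i0, w x := by
            intro T
            by_cases hi0T : i0 ∈ T
            · rw [← Finset.sum_erase_add _ _ hi0T]
              rw [hagree T]; simp [hw']
            · rw [Finset.erase_eq_of_notMem hi0T]
              apply Finset.sum_congr rfl
              intro x hx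
              have : x ≠ i0 := fun h => hi0T (h ▸ hx)
              simp [hw', Function.update_of_ne this]
          have h1 : ∀ T ∈ Q1, ∑ x ∈ T, w' x = 0 := by
            intro T hT
            by_cases hTS : T = {i0}
            · subst hTS; simp [hw']
            · rw [hrow]
              apply hw1
              rw [hQ1']
              exact Finset.mem_image_of_mem _ (Finset.mem_erase.2 ⟨hTS, hT⟩)
          have h2 : ∀ T ∈ Q2, ∑ x ∈ T, w' x = 0 := by
            intro T hT
            rw [hrow]
            apply hw2
            exact Finset.mem_image_of_mem _ hT
          have := hu w' h1 h2 j (Finset.mem_of_mem_erase hj)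
          have hji0 : j ≠ i0 := (Finset.mem_erase.1 hj).1
          rwa [hw', Function.update_of_ne hji0] at this
        · -- half-integrality of new rows (family 1)
          intro T hT
          rw [hQ1'] at hT
          obtain ⟨T0, hT0, rfl⟩ := Finset.mem_image.1 hT
          by_cases hi0T : i0 ∈ T0
          · have : ∑ x ∈ T0.erase i0, v x = (∑ x ∈ T0, v x) - v i0 := by
              rw [← Finset.sum_erase_add _ _ hi0T]; ring
            rw [this]
            exact HalfInt.sub (hh1 _ (Finset.mem_of_mem_erase hT0)) hv0
          · rw [Finset.erase_eq_of_notMem hi0T]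
            exact hh1 _ (Finset.mem_of_mem_erase hT0)
        · intro T hT
          obtain ⟨T0, hT0, rfl⟩ := Finset.mem_image.1 hT
          by_cases hi0T : i0 ∈ T0
          · have : ∑ x ∈ T0.erase i0, v x = (∑ x ∈ T0, v x) - v i0 := by
              rw [← Finset.sum_erase_add _ _ hi0T]; ring
            rw [this]
            exact HalfInt.sub (hh2 _ hT0) hv0
          · rw [Finset.erase_eq_of_notMem hi0T]
            exact hh2 _ hT0
    -- main case analysis
    by_cases hUe : U = ∅
    · subst hUe; simp
    by_cases hc1 : ∃ S ∈ P1, S.card ≤ 1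
    · exact step P1 P2 le_rfl hsub1 hsub2 hdisj1 hdisj2 huniq hhalf1 hhalf2 hc1
    by_cases hc2 : ∃ S ∈ P2, S.card ≤ 1
    · exact step P2 P1 (by omega) hsub2 hsub1 hdisj2 hdisj1
        (fun w hw1 hw2 => huniq w hw2 hw1) hhalf2 hhalf1 hc2
    -- contradiction: all rows have cardinality ≥ 2
    exfalso
    push_neg at hc1 hc2
    -- counting
    have hsum1 : (P1.biUnion id).card = ∑ S ∈ P1, S.card := by
      simpa using Finset.card_biUnion (s := P1) (t := id)
        (fun A hA B hB hAB => hdisj1 A hA B hB hAB)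
    have hsum2 : (P2.biUnion id).card = ∑ S ∈ P2, S.card := by
      simpa using Finset.card_biUnion (s := P2) (t := id)
        (fun A hA B hB hAB => hdisj2 A hA B hB hAB)
    have hbi1 : P1.biUnion id ⊆ U := by
      intro x hx
      obtain ⟨S, hS, hxS⟩ := Finset.mem_biUnion.1 hx
      exact hsub1 S hS hxS
    have hbi2 : P2.biUnion id ⊆ U := by
      intro x hx
      obtain ⟨S, hS, hxS⟩ := Finset.mem_biUnion.1 hx
      exact hsub2 S hS hxS
    have hlow1 : 2 * P1.card ≤ ∑ S ∈ P1, S.card := by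
      calc 2 * P1.card = ∑ _S ∈ P1, 2 := by rw [Finset.sum_const]; ring
        _ ≤ ∑ S ∈ P1, S.card := Finset.sum_le_sum (fun S hS => hc1 S hS)
    have hlow2 : 2 * P2.card ≤ ∑ S ∈ P2, S.card := by
      calc 2 * P2.card = ∑ _S ∈ P2, 2 := by rw [Finset.sum_const]; ring
        _ ≤ ∑ S ∈ P2, S.card := Finset.sum_le_sum (fun S hS => hc2 S hS)
    -- linear algebra: rank of the row space is at least U.card
    set Φ : (E → ℝ) →ₗ[ℝ] ((↥P1 ⊕ ↥P2) → ℝ) :=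
      { toFun := fun w => Sum.elim (fun S : ↥P1 => ∑ i ∈ S.1, w i)
          (fun S : ↥P2 => ∑ i ∈ S.1, w i),
        map_add' := by
          intro x y; funext c; cases c <;> simp [Finset.sum_add_distrib],
        map_smul' := by
          intro r x; funext c; cases c <;> simp [Finset.mul_sum] } with hΦ
    have hker : ∀ w ∈ LinearMap.ker Φ, ∀ i ∈ U, w i = 0 := by
      intro w hw
      apply huniq w
      · intro S hS
        have := congrFun (LinearMap.mem_ker.1 hw) (Sum.inl ⟨S, hS⟩)
        simpa [hΦ] using this
      · intro S hS
        have := congrFun (LinearMap.mem_ker.1 hw) (Sum.inr ⟨S, hS⟩)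
        simpa [hΦ] using this
    -- kernel is contained in the span of the unit vectors outside U
    set Z : Finset (E → ℝ) := Uᶜ.image (fun i => (Pi.single i (1:ℝ) : E → ℝ)) with hZ
    have hkerle : LinearMap.ker Φ ≤ Submodule.span ℝ (Z : Set (E → ℝ)) := by
      intro w hw
      have hwU : ∀ i ∈ U, w i = 0 := hker w hw
      have hwexp : w = ∑ i ∈ Uᶜ, w i • (Pi.single i (1:ℝ) : E → ℝ) := by
        funext j
        rw [Finset.sum_apply]
        by_cases hj : j ∈ U
        · rw [hwU j hj]
          apply (Finset.sum_eq_zero ?_).symm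
          intro i hi
          have : i ≠ j := fun h => (Finset.mem_compl.1 hi) (h ▸ hj)
          simp [Pi.single_apply, this]
        · rw [Finset.sum_eq_single j]
          · simp
          · intro i _ hij
            simp [Pi.single_apply, hij]
          · intro h
            exact absurd (Finset.mem_compl.2 hj) h
      rw [hwexp]
      apply Submodule.sum_mem
      intro i hi
      apply Submodule.smul_mem
      apply Submodule.subset_span
      exact Finset.mem_coe.2 (Finset.mem_image_of_mem _ hi)
    have hkerrank : Module.finrank ℝ (LinearMap.ker Φ) ≤ Fintype.card E - U.card := by
      calc Module.finrank ℝ (LinearMap.ker Φ)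
          ≤ Module.finrank ℝ (Submodule.span ℝ (Z : Set (E → ℝ))) :=
            Submodule.finrank_mono hkerle
        _ ≤ Z.card := finrank_span_finset_le_card Z
        _ ≤ Uᶜ.card := Finset.card_image_le
        _ = Fintype.card E - U.card := by rw [Finset.card_compl]
    have hrn := LinearMap.finrank_range_add_finrank_ker Φ
    rw [Module.finrank_pi ℝ] at hrn
    have hUcard : U.card ≤ Fintype.card E := Finset.card_le_univ U
    have hrangelow : U.card ≤ Module.finrank ℝ (LinearMap.range Φ) := by omega
    -- the range is small
    have hrangehigh : Module.finrank ℝ (LinearMap.range Φ)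
        ≤ Fintype.card (↥P1 ⊕ ↥P2) := by
      calc Module.finrank ℝ (LinearMap.range Φ)
          ≤ Module.finrank ℝ ((↥P1 ⊕ ↥P2) → ℝ) := Submodule.finrank_le _
        _ = Fintype.card (↥P1 ⊕ ↥P2) := Module.finrank_pi ℝ
    have hcards : Fintype.card (↥P1 ⊕ ↥P2) = P1.card + P2.card := by
      rw [Fintype.card_sum, Fintype.card_coe, Fintype.card_coe]
    -- combine counting
    have hmU : P1.card + P2.card ≤ U.card := by
      have e1 : ∑ S ∈ P1, S.card ≤ U.card := by rw [← hsum1]; exact Finset.card_le_card hbi1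
      have e2 : ∑ S ∈ P2, S.card ≤ U.card := by rw [← hsum2]; exact Finset.card_le_card hbi2
      omega
    have hUm : U.card = P1.card + P2.card := by omega
    -- equalities force the biUnions to equal U
    have heq1 : ∑ S ∈ P1, S.card = U.card := by
      have e1 : ∑ S ∈ P1, S.card ≤ U.card := by rw [← hsum1]; exact Finset.card_le_card hbi1
      have e2 : ∑ S ∈ P2, S.card ≤ U.card := by rw [← hsum2]; exact Finset.card_le_card hbi2
      omega
    have heq2 : ∑ S ∈ P2, S.card = U.card := by
      have e1 : ∑ S ∈ P1, S.card ≤ U.card := by rw [← hsum1]; exact Finset.card_le_card hbi1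
      have e2 : ∑ S ∈ P2, S.card ≤ U.card := by rw [← hsum2]; exact Finset.card_le_card hbi2
      omega
    have hbiU1 : P1.biUnion id = U :=
      Finset.eq_of_subset_of_card_le hbi1 (by omega)
    have hbiU2 : P2.biUnion id = U :=
      Finset.eq_of_subset_of_card_le hbi2 (by omega)
    -- the dependency functional
    set L : ((↥P1 ⊕ ↥P2) → ℝ) →ₗ[ℝ] ℝ :=
      { toFun := fun y => (∑ c : ↥P1, y (Sum.inl c)) - (∑ c : ↥P2, y (Sum.inr c)),
        map_add' := by intro x y; simp only [Pi.add_apply, Finset.sum_add_distrib]; ring,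
        map_smul' := by intro r x; simp only [Pi.smul_apply, smul_eq_mul, RingHom.id_apply, mul_sub, Finset.mul_sum] } with hL
    have hrangeker : LinearMap.range Φ ≤ LinearMap.ker L := by
      rintro y ⟨w, rfl⟩
      rw [LinearMap.mem_ker]
      have e1 : ∑ c : ↥P1, ∑ i ∈ c.1, w i = ∑ i ∈ U, w i := by
        have h := Finset.sum_biUnion (s := P1) (t := id) (f := w)
          (fun A hA B hB hAB => hdisj1 A (Finset.mem_coe.1 hA) B (Finset.mem_coe.1 hB) hAB)
        rw [hbiU1] at h
        rw [Finset.sum_coe_sort P1 (fun S => ∑ i ∈ S, w i)]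
        simpa using h.symm
      have e2 : ∑ c : ↥P2, ∑ i ∈ c.1, w i = ∑ i ∈ U, w i := by
        have h := Finset.sum_biUnion (s := P2) (t := id) (f := w)
          (fun A hA B hB hAB => hdisj2 A (Finset.mem_coe.1 hA) B (Finset.mem_coe.1 hB) hAB)
        rw [hbiU2] at h
        rw [Finset.sum_coe_sort P2 (fun S => ∑ i ∈ S, w i)]
        simpa using h.symm
      simp only [hL, hΦ, LinearMap.coe_mk, AddHom.coe_mk]
      simp only [Sum.elim_inl, Sum.elim_inr]
      rw [e1, e2, sub_self]
    -- L is nonzero since P1 is nonempty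
    have hP1ne : P1.Nonempty := by
      by_contra hne
      rw [Finset.not_nonempty_iff_eq_empty] at hne
      rw [hne] at hbiU1
      simp at hbiU1
      exact hUe hbiU1.symm
    obtain ⟨S0, hS0⟩ := hP1ne
    have hLval : L (Pi.single (Sum.inl ⟨S0, hS0⟩ : ↥P1 ⊕ ↥P2) (1:ℝ)) = 1 := by
      simp only [hL, LinearMap.coe_mk, AddHom.coe_mk]
      rw [Finset.sum_eq_single (⟨S0, hS0⟩ : ↥P1)]
      · rw [Finset.sum_eq_zero]
        · simp
        · intro c _
          simp [Pi.single_apply]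
      · intro c _ hc
        have hne : (Sum.inl c : ↥P1 ⊕ ↥P2) ≠ Sum.inl ⟨S0, hS0⟩ := by simp [hc]
        simp [Pi.single_apply, hne]
      · intro h
        exact absurd (Finset.mem_univ _) h
    have hrangeL : Module.finrank ℝ (LinearMap.range L) = 1 := by
      have hle : Module.finrank ℝ (LinearMap.range L) ≤ 1 := by
        calc Module.finrank ℝ (LinearMap.range L) ≤ Module.finrank ℝ ℝ := Submodule.finrank_le _
          _ = 1 := Module.finrank_self ℝ
      have hpos : 0 < Module.finrank ℝ (LinearMap.range L) := by
        rw [Module.finrank_pos_iff]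
        refine ⟨⟨(1:ℝ), ⟨_, hLval⟩⟩, 0, ?_⟩
        intro hcontra
        have := congrArg Subtype.val hcontra
        simpa using this
      omega
    have hrnL := LinearMap.finrank_range_add_finrank_ker L
    rw [Module.finrank_pi ℝ, hrangeL] at hrnL
    have hfinal : Module.finrank ℝ (LinearMap.range Φ)
        ≤ Module.finrank ℝ (LinearMap.ker L) := Submodule.finrank_mono hrangeker
    have hU1 : 1 ≤ U.card := Finset.card_pos.2 (Finset.nonempty_iff_ne_empty.2 hUe)
    omega



section Laminar
variable {E : Type*} [DecidableEq E] [Fintype E]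

/-- The elements of `S` not in any smaller member of the laminar family `L`. -/
noncomputable def lamCore (L : Finset (Finset E)) (S : Finset E) : Finset E :=
  S \ (L.filter (fun T => T ⊂ S)).biUnion id

lemma lamCore_subset (L : Finset (Finset E)) (S : Finset E) : lamCore L S ⊆ S :=
  Finset.sdiff_subset

lemma lamCore_disjoint (L : Finset (Finset E))
    (hlam : ∀ A ∈ L, ∀ B ∈ L, A ⊆ B ∨ B ⊆ A ∨ Disjoint A B) :
    ∀ A ∈ L, ∀ B ∈ L, A ≠ B → Disjoint (lamCore L A) (lamCore L B) := by
  have key : ∀ A ∈ L, ∀ B ∈ L, A ⊂ B → Disjoint (lamCore L A) (lamCore L B) := by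
    intro A hA B hB hAB
    rw [Finset.disjoint_right]
    intro x hxB hxA
    have hxA' : x ∈ A := lamCore_subset L A hxA
    have : x ∈ (L.filter (fun T => T ⊂ B)).biUnion id :=
      Finset.mem_biUnion.2 ⟨A, Finset.mem_filter.2 ⟨hA, hAB⟩, hxA'⟩
    exact (Finset.mem_sdiff.1 hxB).2 this
  intro A hA B hB hne
  rcases hlam A hA B hB with h | h | h
  · exact key A hA B hB (Finset.ssubset_iff_subset_ne.2 ⟨h, hne⟩)
  · exact (key B hB A hA (Finset.ssubset_iff_subset_ne.2 ⟨h, hne.symm⟩)).symm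
  · exact Finset.disjoint_of_subset_left (lamCore_subset L A)
      (Finset.disjoint_of_subset_right (lamCore_subset L B) h)

lemma lamCore_decomp (L : Finset (Finset E))
    (hlam : ∀ A ∈ L, ∀ B ∈ L, A ⊆ B ∨ B ⊆ A ∨ Disjoint A B)
    {S : Finset E} (hS : S ∈ L) (f : E → ℝ) :
    ∑ i ∈ S, f i = ∑ T ∈ L.filter (fun T => T ⊆ S), ∑ i ∈ lamCore L T, f i := by
  have hset : (L.filter (fun T => T ⊆ S)).biUnion (lamCore L) = S := by
    apply Finset.Subset.antisymm
    · intro x hx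
      obtain ⟨T, hT, hxT⟩ := Finset.mem_biUnion.1 hx
      exact (Finset.mem_filter.1 hT).2 (lamCore_subset L T hxT)
    · intro x hx
      set C := L.filter (fun T => x ∈ T ∧ T ⊆ S) with hC
      have hCne : C.Nonempty := ⟨S, Finset.mem_filter.2 ⟨hS, hx, Finset.Subset.refl S⟩⟩
      obtain ⟨T0, hT0C, hT0min⟩ := Finset.exists_min_image C Finset.card hCne
      rw [hC, Finset.mem_filter] at hT0C
      obtain ⟨hT0L, hxT0, hT0S⟩ := hT0C
      apply Finset.mem_biUnion.2
      refine ⟨T0, Finset.mem_filter.2 ⟨hT0L, hT0S⟩, ?_⟩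
      rw [lamCore, Finset.mem_sdiff]
      refine ⟨hxT0, ?_⟩
      intro hcontra
      obtain ⟨T', hT', hxT'⟩ := Finset.mem_biUnion.1 hcontra
      rw [Finset.mem_filter] at hT'
      obtain ⟨hT'L, hT'T0⟩ := hT'
      have hmem : T' ∈ C := Finset.mem_filter.2 ⟨hT'L, hxT', hT'T0.subset.trans hT0S⟩
      have := hT0min T' hmem
      exact absurd (Finset.card_lt_card hT'T0) (by omega)
    
  conv_lhs => rw [← hset]
  rw [Finset.sum_biUnion]
  intro A hA B hB hAB
  exact lamCore_disjoint L hlam A (Finset.mem_filter.1 (Finset.mem_coe.1 hA)).1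
    B (Finset.mem_filter.1 (Finset.mem_coe.1 hB)).1 hAB

lemma lamCore_rows_zero (L : Finset (Finset E))
    (hlam : ∀ A ∈ L, ∀ B ∈ L, A ⊆ B ∨ B ⊆ A ∨ Disjoint A B)
    (w : E → ℝ) (hw : ∀ S ∈ L, ∑ i ∈ lamCore L S, w i = 0) :
    ∀ S ∈ L, ∑ i ∈ S, w i = 0 := by
  intro S hS
  rw [lamCore_decomp L hlam hS w]
  apply Finset.sum_eq_zero
  intro T hT
  exact hw T (Finset.mem_filter.1 hT).1

lemma lamCore_halfint (L : Finset (Finset E))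
    (hlam : ∀ A ∈ L, ∀ B ∈ L, A ⊆ B ∨ B ⊆ A ∨ Disjoint A B)
    (v : E → ℝ) (hv : ∀ S ∈ L, HalfInt (∑ i ∈ S, v i)) :
    ∀ S ∈ L, HalfInt (∑ i ∈ lamCore L S, v i) := by
  suffices h : ∀ n : ℕ, ∀ S ∈ L, S.card ≤ n → HalfInt (∑ i ∈ lamCore L S, v i) by
    intro S hS
    exact h S.card S hS le_rfl
  intro n
  induction n with
  | zero =>
    intro S hS hcard
    have : S = ∅ := Finset.card_eq_zero.1 (Nat.le_zero.1 hcard)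
    subst this
    have : lamCore L ∅ = ∅ := Finset.subset_empty.1 (lamCore_subset L ∅)
    rw [this]
    exact ⟨0, by norm_num⟩
  | succ n IH =>
    intro S hS hcard
    have hsplit : L.filter (fun T => T ⊆ S) = insert S (L.filter (fun T => T ⊂ S)) := by
      ext T
      simp only [Finset.mem_filter, Finset.mem_insert]
      constructor
      · rintro ⟨hTL, hTS⟩
        rcases hTS.eq_or_ssubset with h | h
        · exact Or.inl h
        · exact Or.inr ⟨hTL, h⟩
      · rintro (rfl | ⟨hTL, hTS⟩)
        · exact ⟨hS, Finset.Subset.refl _⟩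
        · exact ⟨hTL, hTS.subset⟩
    have hSnot : S ∉ L.filter (fun T => T ⊂ S) := by
      simp only [Finset.mem_filter]
      rintro ⟨_, h⟩
      exact h.ne rfl
    have hdecomp := lamCore_decomp L hlam hS v
    rw [hsplit, Finset.sum_insert hSnot] at hdecomp
    have hrest : HalfInt (∑ T ∈ L.filter (fun T => T ⊂ S), ∑ i ∈ lamCore L T, v i) := by
      -- each term halfint by IH
      have : ∀ T ∈ L.filter (fun T => T ⊂ S), HalfInt (∑ i ∈ lamCore L T, v i) := by
        intro T hT
        rw [Finset.mem_filter] at hT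
        apply IH T hT.1
        have := Finset.card_lt_card hT.2
        omega
      -- closure of HalfInt under sums
      have hsumclosed : ∀ (F : Finset (Finset E)) (g : Finset E → ℝ),
          (∀ T ∈ F, HalfInt (g T)) → HalfInt (∑ T ∈ F, g T) := by
        intro F
        induction F using Finset.induction with
        | empty => exact fun _ _ => ⟨0, by norm_num⟩
        | insert _ _ hx ih =>
          rename_i a s
          intro g h
          rw [Finset.sum_insert hx]
          obtain ⟨k, hk⟩ := h a (Finset.mem_insert_self a s)
          obtain ⟨l, hl⟩ := ih g (fun T hT => h T (Finset.mem_insert_of_mem hT))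
          exact ⟨k + l, by rw [hk, hl]; push_cast; ring⟩
      exact hsumclosed _ _ this
    obtain ⟨k, hk⟩ := hv S hS
    obtain ⟨l, hl⟩ := hrest
    have : ∑ i ∈ lamCore L S, v i = (∑ i ∈ S, v i) - ∑ T ∈ L.filter (fun T => T ⊂ S), ∑ i ∈ lamCore L T, v i := by
      rw [hdecomp]; ring
    rw [this, hk, hl]
    exact ⟨k - l, by push_cast; ring⟩

end Laminar


section Chain
variable {E : Type*} [DecidableEq E] [Fintype E]

lemma sup_mem_of_closed (T : Finset (Finset E)) (hempty : ∅ ∈ T)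
    (hcup : ∀ A ∈ T, ∀ B ∈ T, A ∪ B ∈ T) :
    ∀ A : Finset (Finset E), A ⊆ T → A.sup id ∈ T := by
  intro A
  induction A using Finset.induction with
  | empty => intro _; simpa using hempty
  | insert _ _ hx ih =>
    rename_i a s
    intro hsub
    rw [Finset.sup_insert]
    have h1 : a ∈ T := hsub (Finset.mem_insert_self a s)
    have h2 : s.sup id ∈ T := ih (fun x hx => hsub (Finset.mem_insert_of_mem hx))
    exact hcup a h1 (s.sup id) h2

/-- From a union/intersection-closed family of tight sets we can extract a chain
whose rows span (in the sense of implying vanishing of) all rows of the family. -/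
lemma exists_spanning_chain (T : Finset (Finset E)) (hempty : ∅ ∈ T)
    (hcap : ∀ A ∈ T, ∀ B ∈ T, A ∩ B ∈ T)
    (hcup : ∀ A ∈ T, ∀ B ∈ T, A ∪ B ∈ T) :
    ∃ CC : Finset (Finset E), CC ⊆ T ∧
      (∀ A ∈ CC, ∀ B ∈ CC, A ⊆ B ∨ B ⊆ A) ∧
      ∀ w : E → ℝ, (∀ C ∈ CC, ∑ i ∈ C, w i = 0) → ∀ S ∈ T, ∑ i ∈ S, w i = 0 := by
  set chains := T.powerset.filter (fun C => ∀ A ∈ C, ∀ B ∈ C, A ⊆ B ∨ B ⊆ A) with hchains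
  have hchne : chains.Nonempty := by
    refine ⟨∅, Finset.mem_filter.2 ⟨Finset.empty_mem_powerset T, ?_⟩⟩
    intro A hA
    simp at hA
  obtain ⟨CC, hCCmem, hCCmax⟩ := Finset.exists_max_image chains Finset.card hchne
  rw [hchains, Finset.mem_filter, Finset.mem_powerset] at hCCmem
  obtain ⟨hCCsub, hCCchain⟩ := hCCmem
  have hins : ∀ X ∈ T, (∀ C ∈ CC, X ⊆ C ∨ C ⊆ X) → X ∈ CC := by
    intro X hX hcomp
    by_contra hXCC
    have hmem : insert X CC ∈ chains := by
      rw [hchains, Finset.mem_filter, Finset.mem_powerset]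
      constructor
      · exact Finset.insert_subset hX hCCsub
      · intro A hA B hB
        rcases Finset.mem_insert.1 hA with rfl | hA'
        · rcases Finset.mem_insert.1 hB with rfl | hB'
          · exact Or.inl (Finset.Subset.refl _)
          · exact hcomp B hB'
        · rcases Finset.mem_insert.1 hB with rfl | hB'
          · exact (hcomp A hA').symm
          · exact hCCchain A hA' B hB'
    have := hCCmax _ hmem
    rw [Finset.card_insert_of_notMem hXCC] at this
    omega
  have hbot : ∅ ∈ CC := hins ∅ hempty (fun C _ => Or.inl (Finset.empty_subset C))
  set Top := T.sup id with hTop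
  have hTopT : Top ∈ T := sup_mem_of_closed T hempty hcup T (Finset.Subset.refl T)
  have hTopCC : Top ∈ CC := by
    apply hins Top hTopT
    intro C hC
    exact Or.inr (Finset.le_sup (f := id) (hCCsub hC))
  refine ⟨CC, hCCsub, hCCchain, ?_⟩
  intro w hw
  have claim : ∀ n : ℕ, ∀ C ∈ CC, C.card ≤ n → ∀ S ∈ T, ∑ i ∈ S ∩ C, w i = 0 := by
    intro n
    induction n with
    | zero =>
      intro C hC hcard S hS
      have : C = ∅ := Finset.card_eq_zero.1 (Nat.le_zero.1 hcard)
      subst this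
      simp
    | succ n IH =>
      intro C hC hcard S hS
      by_cases hCe : C = ∅
      · subst hCe; simp
      have hD : (CC.filter (fun C' => C' ⊂ C)).Nonempty := by
        refine ⟨∅, Finset.mem_filter.2 ⟨hbot, ?_⟩⟩
        exact Finset.nonempty_iff_ne_empty.2 hCe |>.empty_ssubset
      obtain ⟨Cm, hCmD, hCmmax⟩ := Finset.exists_max_image _ Finset.card hD
      rw [Finset.mem_filter] at hCmD
      obtain ⟨hCmCC, hCmC⟩ := hCmD
      have hno : ∀ C' ∈ CC, ¬(Cm ⊂ C' ∧ C' ⊂ C) := by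
        rintro C' hC' ⟨h1, h2⟩
        have hmem : C' ∈ CC.filter (fun C'' => C'' ⊂ C) := Finset.mem_filter.2 ⟨hC', h2⟩
        have := hCmmax C' hmem
        have := Finset.card_lt_card h1
        omega
      set X := (S ∩ C) ∪ Cm with hX
      have hXT : X ∈ T := hcup _ (hcap S hS C (hCCsub hC)) _ (hCCsub hCmCC)
      have hXC : X ⊆ C := Finset.union_subset Finset.inter_subset_right hCmC.subset
      have hCmX : Cm ⊆ X := Finset.subset_union_right
      have hXCC : X ∈ CC := by
        apply hins X hXT
        intro C' hC'
        rcases hCCchain C' hC' Cm hCmCC with h1 | h1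
        · exact Or.inr (h1.trans hCmX)
        · rcases hCCchain C' hC' C hC with h2 | h2
          · by_cases heq : C' = C
            · subst heq; exact Or.inl hXC
            by_cases heq2 : C' = Cm
            · subst heq2; exact Or.inr hCmX
            · exfalso
              apply hno C' hC'
              exact ⟨Finset.ssubset_iff_subset_ne.2 ⟨h1, fun h => heq2 h.symm⟩,
                Finset.ssubset_iff_subset_ne.2 ⟨h2, heq⟩⟩
          · exact Or.inl (hXC.trans h2)
      have hXeq : X = Cm ∨ X = C := by
        by_contra hcon
        push_neg at hcon
        apply hno X hXCC
        exact ⟨Finset.ssubset_iff_subset_ne.2 ⟨hCmX, fun h => hcon.1 h.symm⟩,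
          Finset.ssubset_iff_subset_ne.2 ⟨hXC, hcon.2⟩⟩
      have hIH : ∑ i ∈ S ∩ Cm, w i = 0 := by
        apply IH Cm hCmCC ?_ S hS
        have := Finset.card_lt_card hCmC
        omega
      rcases hXeq with hXm | hXc
      · -- S ∩ C ⊆ Cm
        have hsub : S ∩ C ⊆ Cm := hXm ▸ Finset.subset_union_left
        have : S ∩ C = S ∩ Cm := by
          apply Finset.Subset.antisymm
          · exact Finset.subset_inter Finset.inter_subset_left hsub
          · exact Finset.inter_subset_inter (Finset.Subset.refl S) hCmC.subset
        rw [this]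
        exact hIH
      · -- C \ Cm ⊆ S ∩ C
        have hdiffsub : C \ Cm ⊆ S ∩ C := by
          intro i hi
          rw [Finset.mem_sdiff] at hi
          have : i ∈ X := hXc ▸ hi.1
          rcases Finset.mem_union.1 this with h | h
          · exact h
          · exact absurd h hi.2
        have hSCeq : S ∩ C = (S ∩ Cm) ∪ (C \ Cm) := by
          apply Finset.Subset.antisymm
          · intro i hi
            rw [Finset.mem_union]
            rw [Finset.mem_inter] at hi
            by_cases hiCm : i ∈ Cm
            · exact Or.inl (Finset.mem_inter.2 ⟨hi.1, hiCm⟩)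
            · exact Or.inr (Finset.mem_sdiff.2 ⟨hi.2, hiCm⟩)
          · apply Finset.union_subset
            · exact Finset.inter_subset_inter (Finset.Subset.refl S) hCmC.subset
            · exact hdiffsub
        have hdisj : Disjoint (S ∩ Cm) (C \ Cm) := by
          rw [Finset.disjoint_right]
          intro i hi
          rw [Finset.mem_sdiff] at hi
          rw [Finset.mem_inter]
          rintro ⟨_, h⟩
          exact hi.2 h
        rw [hSCeq, Finset.sum_union hdisj]
        have hsd : ∑ i ∈ C \ Cm, w i = ∑ i ∈ C, w i - ∑ i ∈ Cm, w i := by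
          have := Finset.sum_sdiff (f := w) hCmC.subset
          linarith
        rw [hIH, hsd, hw C hC, hw Cm hCmCC]
        ring
  intro S hS
  have hsub : S ⊆ Top := Finset.le_sup (f := id) hS
  have : S ∩ Top = S := Finset.inter_eq_left.2 hsub
  rw [← this]
  exact claim Top.card Top hTopCC le_rfl S hS

end Chain

/-- Every extreme point of the polytope `𝒫'` (used for two-matroid median) is
half-integral. -/
theorem polytope_P'_half_integral
    {F1 F2 D : Type*} [Fintype F1] [Fintype F2] [Fintype D]
    (M' : Matroid (F1 ⊕ F2)) (hM'E : M'.E = Set.univ)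
    (M2 : Matroid F2) (hM2E : M2.E = Set.univ)
    (F' G' : D → Finset F1)
    (hFG : ∀ j, F' j ⊆ G' j)
    (hdisj : ∀ j k, j ≠ k → Disjoint (G' j) (G' k))
    (lb1 ub1 lb2 ub2 lb ub : ℤ)
    (h1 : lb1 ≤ ub1) (h2 : lb2 ≤ ub2) (h : lb ≤ ub)
    (P : Set (F1 ⊕ F2 → ℝ))
    (hP : P = {v | (∀ i, 0 ≤ v i) ∧
      (∀ S : Finset (F1 ⊕ F2), ∑ i ∈ S, v i ≤ (matroidRank M' S : ℝ)) ∧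
      (∀ S : Finset F2, ∑ i ∈ S, v (Sum.inr i) ≤ (matroidRank M2 S : ℝ)) ∧
      ((lb1 : ℝ) ≤ ∑ i : F1, v (Sum.inl i)) ∧
      (∑ i : F1, v (Sum.inl i) ≤ (ub1 : ℝ)) ∧
      ((lb2 : ℝ) ≤ ∑ i : F2, v (Sum.inr i)) ∧
      (∑ i : F2, v (Sum.inr i) ≤ (ub2 : ℝ)) ∧
      ((lb : ℝ) ≤ ∑ i, v i) ∧ (∑ i, v i ≤ (ub : ℝ)) ∧
      (∀ j : D, (1/2 : ℝ) ≤ ∑ i ∈ F' j, v (Sum.inl i) ∧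
        ∑ i ∈ G' j, v (Sum.inl i) ≤ 1)}) :
    ∀ v ∈ P.extremePoints ℝ, ∀ i, v i ∈ ({0, 1/2, 1} : Set ℝ) := by
  intro v hv
  have hvP : v ∈ P := hv.1
  -- notation
  set F1c : Finset (F1 ⊕ F2) := Finset.univ.image Sum.inl with hF1c
  set F2c : Finset (F1 ⊕ F2) := Finset.univ.image Sum.inr with hF2c
  have hsuml : ∀ (S : Finset F1) (x : F1 ⊕ F2 → ℝ),
      ∑ i ∈ S.image Sum.inl, x i = ∑ i ∈ S, x (Sum.inl i) :=
    fun S x => Finset.sum_image (fun a _ b _ hab => Sum.inl_injective hab)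
  have hsumr : ∀ (S : Finset F2) (x : F1 ⊕ F2 → ℝ),
      ∑ i ∈ S.image Sum.inr, x i = ∑ i ∈ S, x (Sum.inr i) :=
    fun S x => Finset.sum_image (fun a _ b _ hab => Sum.inr_injective hab)
  -- the constraint system
  set Tf : (Finset (F1 ⊕ F2)) ⊕ (Finset F2) ⊕ Unit ⊕ Unit ⊕ Unit ⊕ D → Finset (F1 ⊕ F2) :=
    Sum.elim (fun S => S) (Sum.elim (fun S => S.image Sum.inr) (Sum.elim (fun _ => F1c)
      (Sum.elim (fun _ => F2c) (Sum.elim (fun _ => Finset.univ)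
        (fun j => (G' j).image Sum.inl))))) with hTf
  set bf : (Finset (F1 ⊕ F2)) ⊕ (Finset F2) ⊕ Unit ⊕ Unit ⊕ Unit ⊕ D → ℝ :=
    Sum.elim (fun S => (matroidRank M' S : ℝ)) (Sum.elim (fun S => (matroidRank M2 S : ℝ))
      (Sum.elim (fun _ => (ub1 : ℝ)) (Sum.elim (fun _ => (ub2 : ℝ))
        (Sum.elim (fun _ => (ub : ℝ)) (fun _ => 1))))) with hbf
  set Tg : (F1 ⊕ F2) ⊕ Unit ⊕ Unit ⊕ Unit ⊕ D → Finset (F1 ⊕ F2) :=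
    Sum.elim (fun i => {i}) (Sum.elim (fun _ => F1c) (Sum.elim (fun _ => F2c)
      (Sum.elim (fun _ => Finset.univ) (fun j => (F' j).image Sum.inl)))) with hTg
  set bg : (F1 ⊕ F2) ⊕ Unit ⊕ Unit ⊕ Unit ⊕ D → ℝ :=
    Sum.elim (fun _ => 0) (Sum.elim (fun _ => (lb1 : ℝ)) (Sum.elim (fun _ => (lb2 : ℝ))
      (Sum.elim (fun _ => (lb : ℝ)) (fun _ => 1/2)))) with hbg
  have hPeq : P = {x | (∀ c, ∑ i ∈ Tf c, x i ≤ bf c) ∧ (∀ c, bg c ≤ ∑ i ∈ Tg c, x i)} := by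
    rw [hP]
    ext x
    simp only [Set.mem_setOf_eq]
    constructor
    · rintro ⟨c1, c2, c3, c4, c5, c6, c7, c8, c9, c10⟩
      constructor
      · rintro (S | S | u | u | u | j)
        · exact c2 S
        · simp only [hTf, hbf, Sum.elim_inl, Sum.elim_inr]
          rw [hsumr]; exact c3 S
        · simp only [hTf, hbf, Sum.elim_inl, Sum.elim_inr, hF1c]
          rw [hsuml]; exact c5
        · simp only [hTf, hbf, Sum.elim_inl, Sum.elim_inr, hF2c]
          rw [hsumr]; exact c7
        · simp only [hTf, hbf, Sum.elim_inl, Sum.elim_inr]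
          exact c9
        · simp only [hTf, hbf, Sum.elim_inl, Sum.elim_inr]
          rw [hsuml]; exact (c10 j).2
      · rintro (i | u | u | u | j)
        · simp only [hTg, hbg, Sum.elim_inl, Sum.elim_inr, Finset.sum_singleton]
          exact c1 i
        · simp only [hTg, hbg, Sum.elim_inl, Sum.elim_inr, hF1c]
          rw [hsuml]; exact c4
        · simp only [hTg, hbg, Sum.elim_inl, Sum.elim_inr, hF2c]
          rw [hsumr]; exact c6
        · simp only [hTg, hbg, Sum.elim_inl, Sum.elim_inr]
          exact c8
        · simp only [hTg, hbg, Sum.elim_inl, Sum.elim_inr]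
          rw [hsuml]; exact (c10 j).1
    · rintro ⟨hA, hB⟩
      refine ⟨?_, ?_, ?_, ?_, ?_, ?_, ?_, ?_, ?_, ?_⟩
      · intro i
        have := hB (Sum.inl i)
        simpa [hTg, hbg] using this
      · intro S
        exact hA (Sum.inl S)
      · intro S
        have := hA (Sum.inr (Sum.inl S))
        simp only [hTf, hbf, Sum.elim_inl, Sum.elim_inr] at this
        rwa [hsumr] at this
      · have := hB (Sum.inr (Sum.inl ()))
        simp only [hTg, hbg, Sum.elim_inl, Sum.elim_inr, hF1c] at this
        rwa [hsuml] at this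
      · have := hA (Sum.inr (Sum.inr (Sum.inl ())))
        simp only [hTf, hbf, Sum.elim_inl, Sum.elim_inr, hF1c] at this
        rwa [hsuml] at this
      · have := hB (Sum.inr (Sum.inr (Sum.inl ())))
        simp only [hTg, hbg, Sum.elim_inl, Sum.elim_inr, hF2c] at this
        rwa [hsumr] at this
      · have := hA (Sum.inr (Sum.inr (Sum.inr (Sum.inl ()))))
        simp only [hTf, hbf, Sum.elim_inl, Sum.elim_inr, hF2c] at this
        rwa [hsumr] at this
      · have := hB (Sum.inr (Sum.inr (Sum.inr (Sum.inl ()))))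
        simpa [hTg, hbg] using this
      · have := hA (Sum.inr (Sum.inr (Sum.inr (Sum.inr (Sum.inl ())))))
        simpa [hTf, hbf] using this
      · intro j
        constructor
        · have := hB (Sum.inr (Sum.inr (Sum.inr (Sum.inr j))))
          simp only [hTg, hbg, Sum.elim_inl, Sum.elim_inr] at this
          rwa [hsuml] at this
        · have := hA (Sum.inr (Sum.inr (Sum.inr (Sum.inr (Sum.inr j)))))
          simp only [hTf, hbf, Sum.elim_inl, Sum.elim_inr] at this
          rwa [hsuml] at this
    -- feasibility conditions
  have hvP' := hvP
  rw [hP] at hvP'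
  obtain ⟨c1, c2, c3, c4, c5, c6, c7, c8, c9, c10⟩ := hvP'
  -- tight families for the two matroids
  set Tset : Finset (Finset (F1 ⊕ F2)) :=
    Finset.univ.filter (fun S => ∑ i ∈ S, v i = (matroidRank M' S : ℝ)) with hTset
  set T2set : Finset (Finset F2) :=
    Finset.univ.filter (fun S => ∑ i ∈ S, v (Sum.inr i) = (matroidRank M2 S : ℝ)) with hT2set
  have hTclose : ∀ A ∈ Tset, ∀ B ∈ Tset, A ∩ B ∈ Tset ∧ A ∪ B ∈ Tset := by
    intro A hA B hB
    rw [hTset, Finset.mem_filter] at hA hB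
    have hAB : (∑ i ∈ A ∪ B, v i) + ∑ i ∈ A ∩ B, v i = (∑ i ∈ A, v i) + ∑ i ∈ B, v i :=
      Finset.sum_union_inter
    have hsubm := rank_submodular (M := M') hM'E A B
    have hcast : (matroidRank M' (A ∪ B) : ℝ) + (matroidRank M' (A ∩ B) : ℝ)
        ≤ (matroidRank M' A : ℝ) + (matroidRank M' B : ℝ) := by exact_mod_cast hsubm
    have hu := c2 (A ∪ B)
    have hi := c2 (A ∩ B)
    constructor
    · rw [hTset, Finset.mem_filter]
      exact ⟨Finset.mem_univ _, by linarith [hA.2, hB.2]⟩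
    · rw [hTset, Finset.mem_filter]
      exact ⟨Finset.mem_univ _, by linarith [hA.2, hB.2]⟩
  have hTempty : ∅ ∈ Tset := by
    rw [hTset, Finset.mem_filter]
    refine ⟨Finset.mem_univ _, ?_⟩
    simp [rank_empty]
  obtain ⟨CC1, hCC1sub, hCC1chain, hCC1span⟩ := exists_spanning_chain Tset hTempty
    (fun A hA B hB => (hTclose A hA B hB).1) (fun A hA B hB => (hTclose A hA B hB).2)
  have hT2close : ∀ A ∈ T2set, ∀ B ∈ T2set, A ∩ B ∈ T2set ∧ A ∪ B ∈ T2set := by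
    intro A hA B hB
    rw [hT2set, Finset.mem_filter] at hA hB
    have hAB : (∑ i ∈ A ∪ B, v (Sum.inr i)) + ∑ i ∈ A ∩ B, v (Sum.inr i)
        = (∑ i ∈ A, v (Sum.inr i)) + ∑ i ∈ B, v (Sum.inr i) := Finset.sum_union_inter
    have hsubm := rank_submodular (M := M2) hM2E A B
    have hcast : (matroidRank M2 (A ∪ B) : ℝ) + (matroidRank M2 (A ∩ B) : ℝ)
        ≤ (matroidRank M2 A : ℝ) + (matroidRank M2 B : ℝ) := by exact_mod_cast hsubm
    have hu := c3 (A ∪ B)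
    have hi := c3 (A ∩ B)
    constructor
    · rw [hT2set, Finset.mem_filter]
      exact ⟨Finset.mem_univ _, by linarith [hA.2, hB.2]⟩
    · rw [hT2set, Finset.mem_filter]
      exact ⟨Finset.mem_univ _, by linarith [hA.2, hB.2]⟩
  have hT2empty : ∅ ∈ T2set := by
    rw [hT2set, Finset.mem_filter]
    refine ⟨Finset.mem_univ _, ?_⟩
    simp [rank_empty]
  obtain ⟨CC2, hCC2sub, hCC2chain, hCC2span⟩ := exists_spanning_chain T2set hT2empty
    (fun A hA B hB => (hT2close A hA B hB).1) (fun A hA B hB => (hT2close A hA B hB).2)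
  -- the first laminar family: the M' chain plus tight nonnegativity singletons
  set Zs : Finset (Finset (F1 ⊕ F2)) :=
    (Finset.univ.filter (fun i : F1 ⊕ F2 => v i = 0)).image (fun i => {i}) with hZs
  set L1 : Finset (Finset (F1 ⊕ F2)) := CC1 ∪ Zs with hL1
  have hL1lam : ∀ A ∈ L1, ∀ B ∈ L1, A ⊆ B ∨ B ⊆ A ∨ Disjoint A B := by
    intro A hA B hB
    rw [hL1, Finset.mem_union] at hA hB
    rcases hA with hA | hA <;> rcases hB with hB | hB
    · rcases hCC1chain A hA B hB with h' | h'
      · exact Or.inl h'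
      · exact Or.inr (Or.inl h')
    · obtain ⟨i0, _, rfl⟩ := Finset.mem_image.1 hB
      by_cases hmem : i0 ∈ A
      · exact Or.inr (Or.inl (Finset.singleton_subset_iff.2 hmem))
      · exact Or.inr (Or.inr (Finset.disjoint_singleton_right.2 hmem))
    · obtain ⟨i0, _, rfl⟩ := Finset.mem_image.1 hA
      by_cases hmem : i0 ∈ B
      · exact Or.inl (Finset.singleton_subset_iff.2 hmem)
      · exact Or.inr (Or.inr (Finset.disjoint_singleton_left.2 hmem))
    · obtain ⟨i0, _, rfl⟩ := Finset.mem_image.1 hA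
      obtain ⟨i1, _, rfl⟩ := Finset.mem_image.1 hB
      by_cases heq : i0 = i1
      · subst heq
        exact Or.inl (Finset.Subset.refl _)
      · refine Or.inr (Or.inr ?_)
        rw [Finset.disjoint_singleton_left, Finset.mem_singleton]
        exact heq
  have hL1half : ∀ S ∈ L1, HalfInt (∑ i ∈ S, v i) := by
    intro S hS
    rw [hL1, Finset.mem_union] at hS
    rcases hS with hS | hS
    · have hmem := hCC1sub hS
      rw [hTset, Finset.mem_filter] at hmem
      rw [hmem.2]
      exact HalfInt.natCast _
    · obtain ⟨i0, hi0, rfl⟩ := Finset.mem_image.1 hS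
      rw [Finset.mem_filter] at hi0
      rw [Finset.sum_singleton, hi0.2]
      exact HalfInt.zero
  -- the second laminar family
  set CC2i : Finset (Finset (F1 ⊕ F2)) := CC2.image (fun S => S.image Sum.inr) with hCC2i
  set W1 : Finset (Finset (F1 ⊕ F2)) := ({F1c} : Finset (Finset (F1 ⊕ F2))).filter
    (fun _ => ∑ i ∈ F1c, v i = (lb1 : ℝ) ∨ ∑ i ∈ F1c, v i = (ub1 : ℝ)) with hW1
  set W2 : Finset (Finset (F1 ⊕ F2)) := ({F2c} : Finset (Finset (F1 ⊕ F2))).filter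
    (fun _ => ∑ i ∈ F2c, v i = (lb2 : ℝ) ∨ ∑ i ∈ F2c, v i = (ub2 : ℝ)) with hW2
  set W3 : Finset (Finset (F1 ⊕ F2)) := ({(Finset.univ : Finset (F1 ⊕ F2))} :
      Finset (Finset (F1 ⊕ F2))).filter
    (fun _ => ∑ i, v i = (lb : ℝ) ∨ ∑ i, v i = (ub : ℝ)) with hW3
  set WF : Finset (Finset (F1 ⊕ F2)) := (Finset.univ.filter
    (fun j : D => ∑ i ∈ (F' j).image Sum.inl, v i = 1/2)).image
      (fun j => (F' j).image Sum.inl) with hWF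
  set WG : Finset (Finset (F1 ⊕ F2)) := (Finset.univ.filter
    (fun j : D => ∑ i ∈ (G' j).image Sum.inl, v i = 1)).image
      (fun j => (G' j).image Sum.inl) with hWG
  set L2 : Finset (Finset (F1 ⊕ F2)) := CC2i ∪ W1 ∪ W2 ∪ W3 ∪ WF ∪ WG with hL2
  -- helper facts for laminarity
  have hdisjlr : ∀ (X : Finset F1) (Y : Finset F2),
      Disjoint (X.image (Sum.inl : F1 → F1 ⊕ F2)) (Y.image (Sum.inr : F2 → F1 ⊕ F2)) := by
    intro X Y
    rw [Finset.disjoint_left]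
    rintro a ha hb
    obtain ⟨x, _, rfl⟩ := Finset.mem_image.1 ha
    obtain ⟨y, _, hy⟩ := Finset.mem_image.1 hb
    exact Sum.inr_ne_inl hy
  have himgdisj : ∀ (X Y : Finset F1), Disjoint X Y →
      Disjoint (X.image (Sum.inl : F1 → F1 ⊕ F2)) (Y.image (Sum.inl : F1 → F1 ⊕ F2)) := by
    intro X Y hXY
    rw [Finset.disjoint_left]
    rintro a ha hb
    obtain ⟨x, hx, rfl⟩ := Finset.mem_image.1 ha
    obtain ⟨y, hy, hxy⟩ := Finset.mem_image.1 hb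
    have : y = x := Sum.inl_injective hxy
    subst this
    exact (Finset.disjoint_left.1 hXY hx) hy
  have hL2mem : ∀ S ∈ L2, (∃ S2 ∈ CC2, S = S2.image Sum.inr) ∨ S = F1c ∨ S = F2c ∨
      S = Finset.univ ∨ (∃ j : D, S = (F' j).image Sum.inl) ∨
      (∃ j : D, S = (G' j).image Sum.inl) := by
    intro S hS
    rw [hL2] at hS
    simp only [Finset.mem_union] at hS
    rcases hS with ((((hS | hS) | hS) | hS) | hS) | hS
    · obtain ⟨S2, hS2, rfl⟩ := Finset.mem_image.1 hS
      exact Or.inl ⟨S2, hS2, rfl⟩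
    · rw [hW1, Finset.mem_filter, Finset.mem_singleton] at hS
      exact Or.inr (Or.inl hS.1)
    · rw [hW2, Finset.mem_filter, Finset.mem_singleton] at hS
      exact Or.inr (Or.inr (Or.inl hS.1))
    · rw [hW3, Finset.mem_filter, Finset.mem_singleton] at hS
      exact Or.inr (Or.inr (Or.inr (Or.inl hS.1)))
    · obtain ⟨j, _, rfl⟩ := Finset.mem_image.1 hS
      exact Or.inr (Or.inr (Or.inr (Or.inr (Or.inl ⟨j, rfl⟩))))
    · obtain ⟨j, _, rfl⟩ := Finset.mem_image.1 hS
      exact Or.inr (Or.inr (Or.inr (Or.inr (Or.inr ⟨j, rfl⟩))))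
  have hL2lam : ∀ A ∈ L2, ∀ B ∈ L2, A ⊆ B ∨ B ⊆ A ∨ Disjoint A B := by
    have hFFdisj : ∀ (ja jb : D), ja ≠ jb → Disjoint (F' ja) (F' jb) :=
      fun ja jb hne => Finset.disjoint_of_subset_left (hFG ja)
        (Finset.disjoint_of_subset_right (hFG jb) (hdisj ja jb hne))
    have hFGdisj : ∀ (ja jb : D), ja ≠ jb → Disjoint (F' ja) (G' jb) :=
      fun ja jb hne => Finset.disjoint_of_subset_left (hFG ja) (hdisj ja jb hne)
    intro A hA B hB
    rcases hL2mem A hA with ⟨SA, hSA, rfl⟩ | rfl | rfl | rfl | ⟨ja, rfl⟩ | ⟨ja, rfl⟩ <;>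
      rcases hL2mem B hB with ⟨SB, hSB, rfl⟩ | rfl | rfl | rfl | ⟨jb, rfl⟩ | ⟨jb, rfl⟩
    -- A = CC2 image
    · rcases hCC2chain SA hSA SB hSB with h' | h'
      · exact Or.inl (Finset.image_subset_image h')
      · exact Or.inr (Or.inl (Finset.image_subset_image h'))
    · exact Or.inr (Or.inr ((hdisjlr Finset.univ SA).symm))
    · exact Or.inl (by rw [hF2c]; exact Finset.image_subset_image (Finset.subset_univ SA))
    · exact Or.inl (Finset.subset_univ _)
    · exact Or.inr (Or.inr ((hdisjlr (F' jb) SA).symm))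
    · exact Or.inr (Or.inr ((hdisjlr (G' jb) SA).symm))
    -- A = F1c
    · exact Or.inr (Or.inr (hdisjlr Finset.univ SB))
    · exact Or.inl (Finset.Subset.refl _)
    · exact Or.inr (Or.inr (by rw [hF1c, hF2c]; exact hdisjlr Finset.univ Finset.univ))
    · exact Or.inl (Finset.subset_univ _)
    · exact Or.inr (Or.inl (by rw [hF1c]; exact Finset.image_subset_image (Finset.subset_univ _)))
    · exact Or.inr (Or.inl (by rw [hF1c]; exact Finset.image_subset_image (Finset.subset_univ _)))
    -- A = F2c
    · exact Or.inr (Or.inl (by rw [hF2c]; exact Finset.image_subset_image (Finset.subset_univ SB)))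
    · exact Or.inr (Or.inr (by rw [hF1c, hF2c]; exact (hdisjlr Finset.univ Finset.univ).symm))
    · exact Or.inl (Finset.Subset.refl _)
    · exact Or.inl (Finset.subset_univ _)
    · exact Or.inr (Or.inr (by rw [hF2c]; exact (hdisjlr (F' jb) Finset.univ).symm))
    · exact Or.inr (Or.inr (by rw [hF2c]; exact (hdisjlr (G' jb) Finset.univ).symm))
    -- A = univ
    · exact Or.inr (Or.inl (Finset.subset_univ _))
    · exact Or.inr (Or.inl (Finset.subset_univ _))
    · exact Or.inr (Or.inl (Finset.subset_univ _))
    · exact Or.inl (Finset.Subset.refl _)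
    · exact Or.inr (Or.inl (Finset.subset_univ _))
    · exact Or.inr (Or.inl (Finset.subset_univ _))
    -- A = F' ja image
    · exact Or.inr (Or.inr (hdisjlr (F' ja) SB))
    · exact Or.inl (by rw [hF1c]; exact Finset.image_subset_image (Finset.subset_univ _))
    · exact Or.inr (Or.inr (by rw [hF2c]; exact hdisjlr (F' ja) Finset.univ))
    · exact Or.inl (Finset.subset_univ _)
    · by_cases hjk : ja = jb
      · subst hjk; exact Or.inl (Finset.Subset.refl _)
      · exact Or.inr (Or.inr (himgdisj _ _ (hFFdisj ja jb hjk)))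
    · by_cases hjk : ja = jb
      · subst hjk; exact Or.inl (Finset.image_subset_image (hFG ja))
      · exact Or.inr (Or.inr (himgdisj _ _ (hFGdisj ja jb hjk)))
    -- A = G' ja image
    · exact Or.inr (Or.inr (hdisjlr (G' ja) SB))
    · exact Or.inl (by rw [hF1c]; exact Finset.image_subset_image (Finset.subset_univ _))
    · exact Or.inr (Or.inr (by rw [hF2c]; exact hdisjlr (G' ja) Finset.univ))
    · exact Or.inl (Finset.subset_univ _)
    · by_cases hjk : ja = jb
      · subst hjk; exact Or.inr (Or.inl (Finset.image_subset_image (hFG ja)))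
      · exact Or.inr (Or.inr (himgdisj _ _ (hFGdisj jb ja (fun hh => hjk hh.symm)).symm))
    · by_cases hjk : ja = jb
      · subst hjk; exact Or.inl (Finset.Subset.refl _)
      · exact Or.inr (Or.inr (himgdisj _ _ (hdisj ja jb hjk)))
  have hL2half : ∀ S ∈ L2, HalfInt (∑ i ∈ S, v i) := by
    intro S hS
    rw [hL2] at hS
    simp only [Finset.mem_union] at hS
    rcases hS with ((((hS | hS) | hS) | hS) | hS) | hS
    · obtain ⟨S2, hS2, rfl⟩ := Finset.mem_image.1 hS
      have hmem := hCC2sub hS2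
      rw [hT2set, Finset.mem_filter] at hmem
      rw [hsumr, hmem.2]
      exact HalfInt.natCast _
    · rw [hW1, Finset.mem_filter, Finset.mem_singleton] at hS
      obtain ⟨rfl, hcond | hcond⟩ := hS <;> rw [hcond] <;> exact HalfInt.intCast _
    · rw [hW2, Finset.mem_filter, Finset.mem_singleton] at hS
      obtain ⟨rfl, hcond | hcond⟩ := hS <;> rw [hcond] <;> exact HalfInt.intCast _
    · rw [hW3, Finset.mem_filter, Finset.mem_singleton] at hS
      obtain ⟨rfl, hcond | hcond⟩ := hS <;> rw [hcond] <;> exact HalfInt.intCast _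
    · obtain ⟨j, hj, rfl⟩ := Finset.mem_image.1 hS
      rw [Finset.mem_filter] at hj
      rw [hj.2]
      exact HalfInt.half
    · obtain ⟨j, hj, rfl⟩ := Finset.mem_image.1 hS
      rw [Finset.mem_filter] at hj
      rw [hj.2]
      exact HalfInt.one
  -- cores
  set Pc1 : Finset (Finset (F1 ⊕ F2)) := L1.image (lamCore L1) with hPc1
  set Pc2 : Finset (Finset (F1 ⊕ F2)) := L2.image (lamCore L2) with hPc2
  -- the uniqueness hypothesis for the key lemma
  have huniq : ∀ w : (F1 ⊕ F2) → ℝ, (∀ S ∈ Pc1, ∑ i ∈ S, w i = 0) →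
      (∀ S ∈ Pc2, ∑ i ∈ S, w i = 0) → ∀ i ∈ (Finset.univ : Finset (F1 ⊕ F2)), w i = 0 := by
    intro w hw1 hw2 i0 _
    have hrows1 : ∀ S ∈ L1, ∑ i ∈ S, w i = 0 :=
      lamCore_rows_zero L1 hL1lam w (fun S hS => hw1 _ (Finset.mem_image_of_mem _ hS))
    have hrows2 : ∀ S ∈ L2, ∑ i ∈ S, w i = 0 :=
      lamCore_rows_zero L2 hL2lam w (fun S hS => hw2 _ (Finset.mem_image_of_mem _ hS))
    have hCC1rows : ∀ C ∈ CC1, ∑ i ∈ C, w i = 0 :=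
      fun C hC => hrows1 C (by rw [hL1]; exact Finset.mem_union_left _ hC)
    have hCC2rows : ∀ C ∈ CC2, ∑ i2 ∈ C, w (Sum.inr i2) = 0 := by
      intro C hC
      have := hrows2 (C.image Sum.inr) (by
        rw [hL2]
        refine Finset.mem_union_left _ (Finset.mem_union_left _ (Finset.mem_union_left _
          (Finset.mem_union_left _ (Finset.mem_union_left _ ?_))))
        exact Finset.mem_image_of_mem _ hC)
      rwa [hsumr] at this
    have hwzero : w = 0 := by
      apply extreme_tight Tf bf Tg bg P hPeq v hv w
      · rintro (S | S | u | u | u | j) htight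
        · -- M' rank constraint
          have hStight : S ∈ Tset := by
            rw [hTset, Finset.mem_filter]
            exact ⟨Finset.mem_univ _, htight⟩
          exact hCC1span w hCC1rows S hStight
        · -- M2 rank constraint
          simp only [hTf, Sum.elim_inl, Sum.elim_inr] at htight ⊢
          have hStight : S ∈ T2set := by
            rw [hT2set, Finset.mem_filter]
            refine ⟨Finset.mem_univ _, ?_⟩
            rw [← hsumr S v]
            exact htight
          rw [hsumr]
          exact hCC2span (fun i2 => w (Sum.inr i2)) hCC2rows S hStight
        · -- ub1
          simp only [hTf, hbf, Sum.elim_inl, Sum.elim_inr] at htight ⊢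
          apply hrows2 F1c
          rw [hL2]
          refine Finset.mem_union_left _ (Finset.mem_union_left _ (Finset.mem_union_left _
            (Finset.mem_union_left _ (Finset.mem_union_right _ ?_))))
          rw [hW1, Finset.mem_filter, Finset.mem_singleton]
          exact ⟨rfl, Or.inr htight⟩
        · -- ub2
          simp only [hTf, hbf, Sum.elim_inl, Sum.elim_inr] at htight ⊢
          apply hrows2 F2c
          rw [hL2]
          refine Finset.mem_union_left _ (Finset.mem_union_left _ (Finset.mem_union_left _
            (Finset.mem_union_right _ ?_)))
          rw [hW2, Finset.mem_filter, Finset.mem_singleton]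
          exact ⟨rfl, Or.inr htight⟩
        · -- ub
          simp only [hTf, hbf, Sum.elim_inl, Sum.elim_inr] at htight ⊢
          apply hrows2 Finset.univ
          rw [hL2]
          refine Finset.mem_union_left _ (Finset.mem_union_left _ (Finset.mem_union_right _ ?_))
          rw [hW3, Finset.mem_filter, Finset.mem_singleton]
          exact ⟨rfl, Or.inr htight⟩
        · -- G' j
          simp only [hTf, hbf, Sum.elim_inl, Sum.elim_inr] at htight ⊢
          apply hrows2 ((G' j).image Sum.inl)
          rw [hL2]
          refine Finset.mem_union_right _ ?_
          rw [hWG]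
          exact Finset.mem_image_of_mem _ (Finset.mem_filter.2 ⟨Finset.mem_univ _, htight⟩)
      · rintro (i | u | u | u | j) htight
        · -- nonnegativity
          simp only [hTg, hbg, Sum.elim_inl, Sum.elim_inr, Finset.sum_singleton] at htight ⊢
          have : ({i} : Finset (F1 ⊕ F2)) ∈ L1 := by
            rw [hL1]
            refine Finset.mem_union_right _ ?_
            rw [hZs]
            exact Finset.mem_image_of_mem _ (Finset.mem_filter.2 ⟨Finset.mem_univ _, htight⟩)
          have := hrows1 _ this
          rwa [Finset.sum_singleton] at this
        · -- lb1
          simp only [hTg, hbg, Sum.elim_inl, Sum.elim_inr] at htight ⊢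
          apply hrows2 F1c
          rw [hL2]
          refine Finset.mem_union_left _ (Finset.mem_union_left _ (Finset.mem_union_left _
            (Finset.mem_union_left _ (Finset.mem_union_right _ ?_))))
          rw [hW1, Finset.mem_filter, Finset.mem_singleton]
          exact ⟨rfl, Or.inl htight⟩
        · -- lb2
          simp only [hTg, hbg, Sum.elim_inl, Sum.elim_inr] at htight ⊢
          apply hrows2 F2c
          rw [hL2]
          refine Finset.mem_union_left _ (Finset.mem_union_left _ (Finset.mem_union_left _
            (Finset.mem_union_right _ ?_)))
          rw [hW2, Finset.mem_filter, Finset.mem_singleton]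
          exact ⟨rfl, Or.inl htight⟩
        · -- lb
          simp only [hTg, hbg, Sum.elim_inl, Sum.elim_inr] at htight ⊢
          apply hrows2 Finset.univ
          rw [hL2]
          refine Finset.mem_union_left _ (Finset.mem_union_left _ (Finset.mem_union_right _ ?_))
          rw [hW3, Finset.mem_filter, Finset.mem_singleton]
          exact ⟨rfl, Or.inl htight⟩
        · -- F' j
          simp only [hTg, hbg, Sum.elim_inl, Sum.elim_inr] at htight ⊢
          apply hrows2 ((F' j).image Sum.inl)
          rw [hL2]
          refine Finset.mem_union_left _ (Finset.mem_union_right _ ?_)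
          rw [hWF]
          exact Finset.mem_image_of_mem _ (Finset.mem_filter.2 ⟨Finset.mem_univ _, htight⟩)
    rw [hwzero]
    rfl
  -- apply the key lemma
  have hhalf : ∀ i0 : F1 ⊕ F2, HalfInt (v i0) := by
    intro i0
    refine key_subpartition (Fintype.card (F1 ⊕ F2) + Pc1.card + Pc2.card)
      Finset.univ Pc1 Pc2 v ?_ ?_ ?_ ?_ ?_ huniq ?_ ?_ i0 (Finset.mem_univ i0)
    · rw [Finset.card_univ]
    · exact fun S _ => Finset.subset_univ S
    · exact fun S _ => Finset.subset_univ S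
    · intro A hA B hB hAB
      obtain ⟨A0, hA0, rfl⟩ := Finset.mem_image.1 hA
      obtain ⟨B0, hB0, rfl⟩ := Finset.mem_image.1 hB
      have hne : A0 ≠ B0 := fun hcon => hAB (by rw [hcon])
      exact lamCore_disjoint L1 hL1lam A0 hA0 B0 hB0 hne
    · intro A hA B hB hAB
      obtain ⟨A0, hA0, rfl⟩ := Finset.mem_image.1 hA
      obtain ⟨B0, hB0, rfl⟩ := Finset.mem_image.1 hB
      have hne : A0 ≠ B0 := fun hcon => hAB (by rw [hcon])
      exact lamCore_disjoint L2 hL2lam A0 hA0 B0 hB0 hne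
    · intro S hS
      obtain ⟨S0, hS0, rfl⟩ := Finset.mem_image.1 hS
      exact lamCore_halfint L1 hL1lam v hL1half S0 hS0
    · intro S hS
      obtain ⟨S0, hS0, rfl⟩ := Finset.mem_image.1 hS
      exact lamCore_halfint L2 hL2lam v hL2half S0 hS0
  -- conclude
  intro i
  have hlow : 0 ≤ v i := c1 i
  have hhigh : v i ≤ 1 := by
    have hc := c2 {i}
    rw [Finset.sum_singleton] at hc
    have hr : matroidRank M' {i} ≤ 1 := by
      have := mr_le_card (M := M') (S := ({i} : Finset (F1 ⊕ F2)))
      rwa [Finset.card_singleton] at this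
    have : (matroidRank M' {i} : ℝ) ≤ 1 := by exact_mod_cast hr
    linarith
  obtain ⟨k, hk⟩ := hhalf i
  have hk0 : (0 : ℝ) ≤ (k : ℝ) / 2 := hk ▸ hlow
  have hk2 : ((k : ℝ)) / 2 ≤ 1 := hk ▸ hhigh
  have hkk : 0 ≤ k ∧ k ≤ 2 := by
    constructor
    · exact_mod_cast (by linarith : (0:ℝ) ≤ (k:ℝ))
    · exact_mod_cast (by linarith : (k:ℝ) ≤ 2)
  have : k = 0 ∨ k = 1 ∨ k = 2 := by omega
  simp only [Set.mem_insert_iff, Set.mem_singleton_iff]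
  rcases this with rfl | rfl | rfl
  · left; rw [hk]; norm_num
  · right; left; rw [hk]; norm_num
  · right; right; rw [hk]; norm_num
end
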